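/- arXiv:1101.0017 — 6 statements merged into one kernel-verified Lean document; each statement's English description precedes it below -/
import Mathlib

section
/- Let H be a Hilbert space, H^{-1} a normed space, and ι : H → H^{-1} a compact linear embedding. Let T, S be closed densely defined operators on H and let 𝓗 = ker T ∩ ker S on dom T ∩ dom S. Suppose that for every ε > 0 there is C_ε > 0 such that ‖u‖² ≤ ε(‖Tu‖² + ‖Su‖²) + C_ε‖ι u‖²_{-1} for all u ∈ dom T ∩ dom S. Then 𝓗 is finite-dimensional. -/
open scoped InnerProductSpace

/-- A compactness estimate for a pair of closed densely defined operators
implies that the space of "harmonic" elements `𝓗 = ker T ∩ ker S` is finite-dimensional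
(here expressed as: `𝓗` is contained in the span of finitely many vectors). -/
theorem compactness_estimate_harmonic_finiteDimensional
    {H H' H'' Hm : Type*}
    [NormedAddCommGroup H] [InnerProductSpace ℂ H] [CompleteSpace H]
    [NormedAddCommGroup H'] [InnerProductSpace ℂ H'] [CompleteSpace H']
    [NormedAddCommGroup H''] [InnerProductSpace ℂ H''] [CompleteSpace H'']
    [NormedAddCommGroup Hm] [NormedSpace ℂ Hm]
    (ι : H →L[ℂ] Hm) (hι_compact : IsCompactOperator ι)
    (hι_inj : Function.Injective ι)
    (T : H →ₗ.[ℂ] H') (S : H →ₗ.[ℂ] H'')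
    (hT_closed : T.IsClosed) (hT_dense : Dense (T.domain : Set H))
    (hS_closed : S.IsClosed) (hS_dense : Dense (S.domain : Set H))
    (est : ∀ ε > (0 : ℝ), ∃ C > (0 : ℝ),
      ∀ (u : H) (huT : u ∈ T.domain) (huS : u ∈ S.domain),
        ‖u‖ ^ 2 ≤ ε * (‖T ⟨u, huT⟩‖ ^ 2 + ‖S ⟨u, huS⟩‖ ^ 2) + C * ‖ι u‖ ^ 2) :
    ∃ (n : ℕ) (b : Fin n → H),
      ∀ (u : H) (huT : u ∈ T.domain) (huS : u ∈ S.domain),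
        T ⟨u, huT⟩ = 0 → S ⟨u, huS⟩ = 0 →
          u ∈ Submodule.span ℂ (Set.range b) := by
  classical
  -- The harmonic subspace 𝓗 = ker T ∩ ker S.
  set M : Submodule ℂ H :=
    { carrier := {u | ∃ (hT : u ∈ T.domain) (hS : u ∈ S.domain),
        T ⟨u, hT⟩ = 0 ∧ S ⟨u, hS⟩ = 0}
      add_mem' := by
        rintro a b ⟨hTa, hSa, ea1, ea2⟩ ⟨hTb, hSb, eb1, eb2⟩
        refine ⟨add_mem hTa hTb, add_mem hSa hSb, ?_, ?_⟩
        · have := T.map_add ⟨a, hTa⟩ ⟨b, hTb⟩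
          rw [show (⟨a, hTa⟩ + ⟨b, hTb⟩ : T.domain) = ⟨a + b, add_mem hTa hTb⟩ from rfl] at this
          rw [this, ea1, eb1, add_zero]
        · have := S.map_add ⟨a, hSa⟩ ⟨b, hSb⟩
          rw [show (⟨a, hSa⟩ + ⟨b, hSb⟩ : S.domain) = ⟨a + b, add_mem hSa hSb⟩ from rfl] at this
          rw [this, ea2, eb2, add_zero]
      zero_mem' := by
        refine ⟨zero_mem _, zero_mem _, ?_, ?_⟩
        · rw [show (⟨(0 : H), zero_mem _⟩ : T.domain) = 0 from rfl, T.map_zero]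
        · rw [show (⟨(0 : H), zero_mem _⟩ : S.domain) = 0 from rfl, S.map_zero]
      smul_mem' := by
        rintro c a ⟨hTa, hSa, ea1, ea2⟩
        refine ⟨Submodule.smul_mem _ c hTa, Submodule.smul_mem _ c hSa, ?_, ?_⟩
        · have := T.map_smul c ⟨a, hTa⟩
          rw [show (c • (⟨a, hTa⟩ : T.domain)) = ⟨c • a, Submodule.smul_mem _ c hTa⟩ from rfl]
            at this
          rw [this, ea1, smul_zero]
        · have := S.map_smul c ⟨a, hSa⟩
          rw [show (c • (⟨a, hSa⟩ : S.domain)) = ⟨c • a, Submodule.smul_mem _ c hSa⟩ from rfl]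
            at this
          rw [this, ea2, smul_zero] } with hMdef
  -- M is closed, since T and S are closed operators.
  have hMclosed : IsClosed (M : Set H) := by
    rw [← isSeqClosed_iff_isClosed]
    intro x p hx hp
    have h1 : ∀ n, ((x n : H), (0 : H')) ∈ T.graph := by
      intro n
      obtain ⟨hT, hS, e1, e2⟩ := hx n
      exact T.mem_graph_iff.2 ⟨⟨x n, hT⟩, rfl, e1⟩
    have h2 : ∀ n, ((x n : H), (0 : H'')) ∈ S.graph := by
      intro n
      obtain ⟨hT, hS, e1, e2⟩ := hx n
      exact S.mem_graph_iff.2 ⟨⟨x n, hS⟩, rfl, e2⟩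
    have hlim1 : Filter.Tendsto (fun n => ((x n : H), (0 : H'))) Filter.atTop (nhds (p, 0)) :=
      hp.prodMk_nhds tendsto_const_nhds
    have hlim2 : Filter.Tendsto (fun n => ((x n : H), (0 : H''))) Filter.atTop (nhds (p, 0)) :=
      hp.prodMk_nhds tendsto_const_nhds
    have hg1 : (p, (0 : H')) ∈ T.graph := hT_closed.isSeqClosed h1 hlim1
    have hg2 : (p, (0 : H'')) ∈ S.graph := hS_closed.isSeqClosed h2 hlim2
    obtain ⟨y1, hy1, hy1'⟩ := T.mem_graph_iff.1 hg1
    obtain ⟨y2, hy2, hy2'⟩ := S.mem_graph_iff.1 hg2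
    have hy1c : (y1 : H) = p := hy1
    have hy2c : (y2 : H) = p := hy2
    refine ⟨hy1c ▸ y1.2, hy2c ▸ y2.2, ?_, ?_⟩
    · rw [show (⟨p, hy1c ▸ y1.2⟩ : T.domain) = y1 from Subtype.ext hy1c.symm]; exact hy1'
    · rw [show (⟨p, hy2c ▸ y2.2⟩ : S.domain) = y2 from Subtype.ext hy2c.symm]; exact hy2'
  -- The estimate with ε = 1 bounds ‖u‖ by ‖ι u‖ on M.
  obtain ⟨C, hC, hest⟩ := est 1 one_pos
  have key : ∀ u ∈ M, ‖u‖ ≤ Real.sqrt C * ‖ι u‖ := by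
    rintro u ⟨hT, hS, e1, e2⟩
    have h := hest u hT hS
    rw [e1, e2] at h
    simp only [norm_zero, ne_eq, OfNat.ofNat_ne_zero, not_false_eq_true, zero_pow, add_zero,
      zero_add, one_mul, mul_zero] at h
    calc ‖u‖ = Real.sqrt (‖u‖ ^ 2) := by rw [Real.sqrt_sq (norm_nonneg u)]
      _ ≤ Real.sqrt (C * ‖ι u‖ ^ 2) := Real.sqrt_le_sqrt h
      _ = Real.sqrt C * ‖ι u‖ := by
          rw [Real.sqrt_mul hC.le, Real.sqrt_sq (norm_nonneg _)]
  -- The unit ball of M is totally bounded.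
  set B : Set H := (M : Set H) ∩ Metric.closedBall 0 1 with hBdef
  have hBbdd : Bornology.IsBounded B :=
    (Metric.isBounded_closedBall (x := (0 : H)) (r := 1)).subset Set.inter_subset_right
  have himg : TotallyBounded (⇑ι '' B) := by
    have h := hι_compact.isCompact_closure_image_of_bounded
      (f := (ι : H →ₗ[ℂ] Hm)) hBbdd
    exact (h.totallyBounded.subset subset_closure : TotallyBounded (⇑ι '' B))
  have hTB : TotallyBounded B := by
    rw [Metric.totallyBounded_iff]
    intro ε hε
    have hδ : (0 : ℝ) < ε / (Real.sqrt C + 1) := by positivity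
    obtain ⟨t, hts, htfin, htcov⟩ := totallyBounded_iff_subset.1 himg
      {p : Hm × Hm | dist p.1 p.2 < ε / (Real.sqrt C + 1)} (Metric.dist_mem_uniformity hδ)
    -- choose preimages of the centers
    have hchoice : ∀ y ∈ t, ∃ u ∈ B, ι u = y := fun y hy => hts hy
    set f : Hm → H := fun y => if h : ∃ u ∈ B, ι u = y then h.choose else 0
      with hfdef
    refine ⟨f '' t, htfin.image f, ?_⟩
    intro x hx
    have hxi : ι x ∈ ι '' B := ⟨x, hx, rfl⟩
    obtain ⟨y, hy, hxy⟩ := Set.mem_iUnion₂.1 (htcov hxi)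
    have hex : ∃ u ∈ B, ι u = y := hchoice y hy
    have hfy : f y = hex.choose := by rw [hfdef]; exact dif_pos hex
    obtain ⟨hfyB, hfyι⟩ := hex.choose_spec
    refine Set.mem_iUnion₂.2 ⟨f y, Set.mem_image_of_mem f hy, ?_⟩
    have hsub : x - f y ∈ M := sub_mem hx.1 (hfy ▸ hfyB).1
    have hd : dist (ι x) y < ε / (Real.sqrt C + 1) := hxy
    have : ‖x - f y‖ ≤ Real.sqrt C * ‖ι (x - f y)‖ := key _ hsub
    have hιeq : ι (x - f y) = ι x - y := by
      rw [map_sub, hfy, hfyι]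
    rw [Metric.mem_ball, dist_eq_norm]
    have hnorm : ‖ι x - y‖ < ε / (Real.sqrt C + 1) := by
      rwa [dist_eq_norm] at hd
    calc ‖x - f y‖ ≤ Real.sqrt C * ‖ι (x - f y)‖ := this
      _ = Real.sqrt C * ‖ι x - y‖ := by rw [hιeq]
      _ ≤ Real.sqrt C * (ε / (Real.sqrt C + 1)) := by
          exact mul_le_mul_of_nonneg_left hnorm.le (Real.sqrt_nonneg C)
      _ < (Real.sqrt C + 1) * (ε / (Real.sqrt C + 1)) := by
          have h1 : Real.sqrt C < Real.sqrt C + 1 := by linarith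
          exact mul_lt_mul_of_pos_right h1 hδ
      _ = ε := by field_simp
  -- Hence B is compact.
  have hBcompact : IsCompact B :=
    TotallyBounded.isCompact_of_isClosed hTB (hMclosed.inter Metric.isClosed_closedBall)
  -- Therefore the closed unit ball of M is compact, so M is finite-dimensional.
  have hball : IsCompact (Metric.closedBall (0 : M) 1) := by
    rw [Topology.IsEmbedding.subtypeVal.isCompact_iff]
    convert hBcompact using 1
    ext x
    constructor
    · rintro ⟨⟨u, hu⟩, hmem, rfl⟩
      exact ⟨hu, by simpa [Metric.mem_closedBall, dist_eq_norm] using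
        (by simpa [Metric.mem_closedBall, dist_eq_norm] using hmem : ‖(⟨u, hu⟩ : M)‖ ≤ 1)⟩
    · rintro ⟨hxM, hxB⟩
      exact ⟨⟨x, hxM⟩, by simpa [Metric.mem_closedBall, dist_eq_norm] using
        (by simpa [Metric.mem_closedBall, dist_eq_norm] using hxB : ‖x‖ ≤ 1), rfl⟩
  have : FiniteDimensional ℂ M := FiniteDimensional.of_isCompact_closedBall₀ ℂ one_pos hball
  -- Extract a finite basis and push it to H.
  let bas := Module.finBasis ℂ M
  refine ⟨Module.finrank ℂ M, fun i => (bas i : H), ?_⟩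
  intro u huT huS hTu hSu
  have huM : u ∈ M := ⟨huT, huS, hTu, hSu⟩
  have hmem : (⟨u, huM⟩ : M) ∈ Submodule.span ℂ (Set.range bas) := by
    rw [bas.span_eq]; trivial
  have := Submodule.mem_map_of_mem (f := M.subtype) hmem
  rw [Submodule.map_span] at this
  have hrange : M.subtype '' Set.range bas = Set.range fun i => (bas i : H) := by
    rw [← Set.range_comp]; rfl
  rwa [hrange] at this
end

section
/- Under the same hypotheses (compact embedding ι : H → H^{-1} and compactness estimate ‖u‖² ≤ ε(‖Tu‖² + ‖Su‖²) + C_ε‖ι u‖²_{-1}), there is a constant C > 0 such that ‖u‖² ≤ C(‖Tu‖² + ‖Su‖²) for all u ∈ dom T ∩ dom S orthogonal to 𝓗 = ker T ∩ ker S. -/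
set_option maxHeartbeats 1000000 in
/-- A compactness estimate implies the basic estimate with a uniform constant
on the orthogonal complement of the harmonic space `𝓗 = ker T ∩ ker S`
(cf. Nicoara, Lemma 5.3). -/
theorem compactness_estimate_basic_estimate_on_orthogonal
    {H H' H'' Hm : Type*}
    [NormedAddCommGroup H] [InnerProductSpace ℂ H] [CompleteSpace H]
    [NormedAddCommGroup H'] [InnerProductSpace ℂ H'] [CompleteSpace H']
    [NormedAddCommGroup H''] [InnerProductSpace ℂ H''] [CompleteSpace H'']
    [NormedAddCommGroup Hm] [NormedSpace ℂ Hm]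
    (ι : H →L[ℂ] Hm) (hι_compact : IsCompactOperator ι)
    (hι_inj : Function.Injective ι)
    (T : H →ₗ.[ℂ] H') (S : H →ₗ.[ℂ] H'')
    (hT_closed : T.IsClosed) (hT_dense : Dense (T.domain : Set H))
    (hS_closed : S.IsClosed) (hS_dense : Dense (S.domain : Set H))
    (est : ∀ ε > (0 : ℝ), ∃ C > (0 : ℝ),
      ∀ (u : H) (huT : u ∈ T.domain) (huS : u ∈ S.domain),
        ‖u‖ ^ 2 ≤ ε * (‖T ⟨u, huT⟩‖ ^ 2 + ‖S ⟨u, huS⟩‖ ^ 2) + C * ‖ι u‖ ^ 2) :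
    ∃ C > (0 : ℝ),
      ∀ (u : H) (huT : u ∈ T.domain) (huS : u ∈ S.domain),
        (∀ (v : H) (hvT : v ∈ T.domain) (hvS : v ∈ S.domain),
            T ⟨v, hvT⟩ = 0 → S ⟨v, hvS⟩ = 0 → inner (𝕜 := ℂ) u v = 0) →
        ‖u‖ ^ 2 ≤ C * (‖T ⟨u, huT⟩‖ ^ 2 + ‖S ⟨u, huS⟩‖ ^ 2) := by
  by_contra hcon
  push_neg at hcon
  -- extract a sequence violating the estimate with constant n+1
  choose u huT huS horth hbig using fun n : ℕ =>
    hcon ((n : ℝ) + 1) (by positivity)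
  -- each u n is nonzero
  have hupos : ∀ n, 0 < ‖u n‖ := by
    intro n
    have h := hbig n
    have hq : (0:ℝ) ≤ ‖T ⟨u n, huT n⟩‖ ^ 2 + ‖S ⟨u n, huS n⟩‖ ^ 2 := by positivity
    have hn1 : (0:ℝ) < (n:ℝ) + 1 := by positivity
    nlinarith [norm_nonneg (u n)]
  -- normalize
  set c : ℕ → ℂ := fun n => ((‖u n‖⁻¹ : ℝ) : ℂ) with hc
  set v : ℕ → H := fun n => c n • u n with hv
  have hvT : ∀ n, v n ∈ T.domain := fun n => T.domain.smul_mem _ (huT n)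
  have hvS : ∀ n, v n ∈ S.domain := fun n => S.domain.smul_mem _ (huS n)
  have hcnorm : ∀ n, ‖c n‖ = ‖u n‖⁻¹ := by
    intro n
    simp [hc, abs_of_nonneg (inv_nonneg.2 (norm_nonneg (u n)))]
  have hvnorm : ∀ n, ‖v n‖ = 1 := by
    intro n
    rw [hv]
    simp only [norm_smul, hcnorm]
    rw [inv_mul_cancel₀ (hupos n).ne']
  have hTv : ∀ n, T ⟨v n, hvT n⟩ = c n • T ⟨u n, huT n⟩ := by
    intro n
    have : (⟨v n, hvT n⟩ : T.domain) = c n • (⟨u n, huT n⟩ : T.domain) := rfl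
    rw [this, T.map_smul]
  have hSv : ∀ n, S ⟨v n, hvS n⟩ = c n • S ⟨u n, huS n⟩ := by
    intro n
    have : (⟨v n, hvS n⟩ : S.domain) = c n • (⟨u n, huS n⟩ : S.domain) := rfl
    rw [this, S.map_smul]
  -- the key smallness estimate
  have hq' : ∀ n : ℕ, ((n:ℝ) + 1) * (‖T ⟨v n, hvT n⟩‖ ^ 2 + ‖S ⟨v n, hvS n⟩‖ ^ 2) < 1 := by
    intro n
    have h := hbig n
    have hup := hupos n
    rw [hTv, hSv]
    simp only [norm_smul, hcnorm]
    rw [mul_pow, mul_pow, ← mul_add]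
    have hinv : (0:ℝ) < (‖u n‖⁻¹) ^ 2 := by positivity
    have : ((n:ℝ) + 1) * (‖T ⟨u n, huT n⟩‖ ^ 2 + ‖S ⟨u n, huS n⟩‖ ^ 2) < ‖u n‖ ^ 2 := h
    calc ((n:ℝ) + 1) * ((‖u n‖⁻¹) ^ 2 * (‖T ⟨u n, huT n⟩‖ ^ 2 + ‖S ⟨u n, huS n⟩‖ ^ 2))
        = (‖u n‖⁻¹) ^ 2 * (((n:ℝ) + 1) * (‖T ⟨u n, huT n⟩‖ ^ 2 + ‖S ⟨u n, huS n⟩‖ ^ 2)) := by ring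
      _ < (‖u n‖⁻¹) ^ 2 * ‖u n‖ ^ 2 := by exact mul_lt_mul_of_pos_left this hinv
      _ = 1 := by field_simp
  have hone : ∀ n : ℕ, (1:ℝ) ≤ (n:ℝ) + 1 := by
    intro n; have : (0:ℝ) ≤ (n:ℝ) := Nat.cast_nonneg n; linarith
  have hTv1 : ∀ n, ‖T ⟨v n, hvT n⟩‖ ^ 2 < 1 := by
    intro n
    have := hq' n
    have h1 := hone n
    nlinarith [sq_nonneg ‖S ⟨v n, hvS n⟩‖, sq_nonneg ‖T ⟨v n, hvT n⟩‖]
  have hSv1 : ∀ n, ‖S ⟨v n, hvS n⟩‖ ^ 2 < 1 := by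
    intro n
    have := hq' n
    have h1 := hone n
    nlinarith [sq_nonneg ‖S ⟨v n, hvS n⟩‖, sq_nonneg ‖T ⟨v n, hvT n⟩‖]
  -- orthogonality of v n to the harmonic space
  have hvorth : ∀ n (w : H) (hwT : w ∈ T.domain) (hwS : w ∈ S.domain),
      T ⟨w, hwT⟩ = 0 → S ⟨w, hwS⟩ = 0 → inner (𝕜 := ℂ) (v n) w = 0 := by
    intro n w hwT hwS hT0 hS0
    have := horth n w hwT hwS hT0 hS0
    rw [hv]
    simp only [inner_smul_left, this, mul_zero]
  -- compactness: ι (v n) lies in a compact set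
  obtain ⟨K, hK, hKsub⟩ :=
    hι_compact.image_closedBall_subset_compact (𝕜₁ := ℂ) (f := (ι : H →ₗ[ℂ] Hm)) 1
  have hmem : ∀ n, ι (v n) ∈ K := by
    intro n
    apply hKsub
    exact ⟨v n, by simp [Metric.mem_closedBall, hvnorm n], rfl⟩
  obtain ⟨z, hzK, φ, hφ, hφtend⟩ := hK.tendsto_subseq hmem
  -- the subsequence v ∘ φ is Cauchy
  have hcauchy : CauchySeq (fun k => v (φ k)) := by
    rw [Metric.cauchySeq_iff]
    intro δ hδ
    obtain ⟨C, hC, hest⟩ := est (δ ^ 2 / 16) (by positivity)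
    have hι_cauchy := hφtend.cauchySeq
    rw [Metric.cauchySeq_iff] at hι_cauchy
    obtain ⟨N, hN⟩ := hι_cauchy (Real.sqrt (δ ^ 2 / (2 * C))) (by positivity)
    refine ⟨N, fun m hm n hn => ?_⟩
    have hdT : m ∈ Set.Ici N := hm
    -- domain memberships for the difference
    have hmT : v (φ m) - v (φ n) ∈ T.domain := T.domain.sub_mem (hvT _) (hvT _)
    have hmS : v (φ m) - v (φ n) ∈ S.domain := S.domain.sub_mem (hvS _) (hvS _)
    have hTd : T ⟨v (φ m) - v (φ n), hmT⟩ = T ⟨v (φ m), hvT _⟩ - T ⟨v (φ n), hvT _⟩ := by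
      have : (⟨v (φ m) - v (φ n), hmT⟩ : T.domain)
          = (⟨v (φ m), hvT _⟩ : T.domain) - ⟨v (φ n), hvT _⟩ := rfl
      rw [this, T.map_sub]
    have hSd : S ⟨v (φ m) - v (φ n), hmS⟩ = S ⟨v (φ m), hvS _⟩ - S ⟨v (φ n), hvS _⟩ := by
      have : (⟨v (φ m) - v (φ n), hmS⟩ : S.domain)
          = (⟨v (φ m), hvS _⟩ : S.domain) - ⟨v (φ n), hvS _⟩ := rfl
      rw [this, S.map_sub]
    have hest' := hest (v (φ m) - v (φ n)) hmT hmS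
    rw [hTd, hSd] at hest'
    have hT2 : ‖T ⟨v (φ m), hvT _⟩ - T ⟨v (φ n), hvT _⟩‖ ^ 2 ≤ 4 := by
      have h1 := hTv1 (φ m); have h2 := hTv1 (φ n)
      have h3 := norm_sub_le (T ⟨v (φ m), hvT _⟩) (T ⟨v (φ n), hvT _⟩)
      have h4 := pow_le_pow_left₀ (norm_nonneg (T ⟨v (φ m), hvT _⟩ - T ⟨v (φ n), hvT _⟩)) h3 2
      nlinarith [h4, sq_nonneg (‖T ⟨v (φ m), hvT _⟩‖ - ‖T ⟨v (φ n), hvT _⟩‖)]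
    have hS2 : ‖S ⟨v (φ m), hvS _⟩ - S ⟨v (φ n), hvS _⟩‖ ^ 2 ≤ 4 := by
      have h1 := hSv1 (φ m); have h2 := hSv1 (φ n)
      have h3 := norm_sub_le (S ⟨v (φ m), hvS _⟩) (S ⟨v (φ n), hvS _⟩)
      have h4 := pow_le_pow_left₀ (norm_nonneg (S ⟨v (φ m), hvS _⟩ - S ⟨v (φ n), hvS _⟩)) h3 2
      nlinarith [h4, sq_nonneg (‖S ⟨v (φ m), hvS _⟩‖ - ‖S ⟨v (φ n), hvS _⟩‖)]
    have hιsmall : ‖ι (v (φ m) - v (φ n))‖ ^ 2 < δ ^ 2 / (2 * C) := by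
      have := hN m hm n hn
      rw [dist_eq_norm] at this
      have hnn : (0:ℝ) ≤ ‖ι (v (φ m)) - ι (v (φ n))‖ := norm_nonneg _
      have hsq : ‖ι (v (φ m)) - ι (v (φ n))‖ ^ 2 < Real.sqrt (δ ^ 2 / (2 * C)) ^ 2 := by
        have hpos : (0:ℝ) < Real.sqrt (δ ^ 2 / (2 * C)) :=
          Real.sqrt_pos.mpr (by positivity)
        exact sq_lt_sq' (lt_of_lt_of_le (neg_lt_zero.mpr hpos) (norm_nonneg _)) this
      rw [Real.sq_sqrt (by positivity)] at hsq
      simpa [map_sub] using hsq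
    have : ‖v (φ m) - v (φ n)‖ ^ 2 < δ ^ 2 := by
      calc ‖v (φ m) - v (φ n)‖ ^ 2
          ≤ δ ^ 2 / 16 * (‖T ⟨v (φ m), hvT _⟩ - T ⟨v (φ n), hvT _⟩‖ ^ 2
            + ‖S ⟨v (φ m), hvS _⟩ - S ⟨v (φ n), hvS _⟩‖ ^ 2)
            + C * ‖ι (v (φ m) - v (φ n))‖ ^ 2 := hest'
        _ < δ ^ 2 / 16 * 8 + C * (δ ^ 2 / (2 * C)) := by
            apply add_lt_add_of_le_of_lt
            · apply mul_le_mul_of_nonneg_left (by linarith) (by positivity)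
            · exact mul_lt_mul_of_pos_left hιsmall hC
        _ = δ ^ 2 / 2 + δ ^ 2 / 2 := by field_simp; ring
        _ = δ ^ 2 := by ring
    rw [dist_eq_norm]
    have hd := Real.sqrt_lt_sqrt (sq_nonneg ‖v (φ m) - v (φ n)‖) this
    rwa [Real.sqrt_sq (norm_nonneg _), Real.sqrt_sq hδ.le] at hd
  obtain ⟨w, hw⟩ := cauchySeq_tendsto_of_complete hcauchy
  -- ‖w‖ = 1
  have hwnorm : ‖w‖ = 1 := by
    have h1 : Filter.Tendsto (fun k => ‖v (φ k)‖) Filter.atTop (nhds ‖w‖) :=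
      hw.norm
    have h2 : Filter.Tendsto (fun k => ‖v (φ k)‖) Filter.atTop (nhds 1) := by
      simp only [hvnorm]; exact tendsto_const_nhds
    exact tendsto_nhds_unique h1 h2
  -- T (v ∘ φ) → 0 and S (v ∘ φ) → 0
  have hbound : ∀ (k : ℕ), (1:ℝ) / ((φ k : ℝ) + 1) ≤ 1 / ((k : ℝ) + 1) := by
    intro k
    apply one_div_le_one_div_of_le (by positivity)
    have hk : k ≤ φ k := hφ.le_apply
    exact_mod_cast Nat.succ_le_succ hk
  have hsqrt0 : Filter.Tendsto (fun k : ℕ => Real.sqrt (1 / ((k:ℝ) + 1)))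
      Filter.atTop (nhds 0) := by
    have h0 : Filter.Tendsto (fun k : ℕ => 1 / ((k:ℝ) + 1)) Filter.atTop (nhds 0) :=
      tendsto_one_div_add_atTop_nhds_zero_nat
    have h1 := (Real.continuous_sqrt.tendsto 0).comp h0
    simpa only [Function.comp_def, Real.sqrt_zero] using h1
  have hTtend : Filter.Tendsto (fun k => T ⟨v (φ k), hvT (φ k)⟩) Filter.atTop
      (nhds 0) := by
    rw [tendsto_zero_iff_norm_tendsto_zero]
    apply squeeze_zero (fun k => norm_nonneg _) _ hsqrt0
    intro k
    have h := hq' (φ k)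
    have hle : ‖T ⟨v (φ k), hvT (φ k)⟩‖ ^ 2 ≤ 1 / ((φ k : ℝ) + 1) := by
      have hx : (0:ℝ) < (φ k : ℝ) + 1 := by positivity
      have hb : (0:ℝ) ≤ ‖S ⟨v (φ k), hvS (φ k)⟩‖ ^ 2 := sq_nonneg _
      have hxb := mul_nonneg hx.le hb
      rw [le_div_iff₀ hx]
      nlinarith [h, hxb]
    calc ‖T ⟨v (φ k), hvT (φ k)⟩‖ = Real.sqrt (‖T ⟨v (φ k), hvT (φ k)⟩‖ ^ 2) := by
          rw [Real.sqrt_sq (norm_nonneg _)]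
      _ ≤ Real.sqrt (1 / ((k:ℝ) + 1)) :=
          Real.sqrt_le_sqrt (le_trans hle (hbound k))
  have hStend : Filter.Tendsto (fun k => S ⟨v (φ k), hvS (φ k)⟩) Filter.atTop
      (nhds 0) := by
    rw [tendsto_zero_iff_norm_tendsto_zero]
    apply squeeze_zero (fun k => norm_nonneg _) _ hsqrt0
    intro k
    have h := hq' (φ k)
    have hle : ‖S ⟨v (φ k), hvS (φ k)⟩‖ ^ 2 ≤ 1 / ((φ k : ℝ) + 1) := by
      have hx : (0:ℝ) < (φ k : ℝ) + 1 := by positivity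
      have hb : (0:ℝ) ≤ ‖T ⟨v (φ k), hvT (φ k)⟩‖ ^ 2 := sq_nonneg _
      have hxb := mul_nonneg hx.le hb
      rw [le_div_iff₀ hx]
      nlinarith [h, hxb]
    calc ‖S ⟨v (φ k), hvS (φ k)⟩‖ = Real.sqrt (‖S ⟨v (φ k), hvS (φ k)⟩‖ ^ 2) := by
          rw [Real.sqrt_sq (norm_nonneg _)]
      _ ≤ Real.sqrt (1 / ((k:ℝ) + 1)) :=
          Real.sqrt_le_sqrt (le_trans hle (hbound k))
  -- closedness: w ∈ dom T with T w = 0, and similarly for S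
  have hwgraphT : (w, (0 : H')) ∈ T.graph := by
    apply hT_closed.mem_of_tendsto (hw.prodMk_nhds hTtend)
    exact Filter.Eventually.of_forall fun k => T.mem_graph ⟨v (φ k), hvT (φ k)⟩
  have hwgraphS : (w, (0 : H'')) ∈ S.graph := by
    apply hS_closed.mem_of_tendsto (hw.prodMk_nhds hStend)
    exact Filter.Eventually.of_forall fun k => S.mem_graph ⟨v (φ k), hvS (φ k)⟩
  rw [T.mem_graph_iff] at hwgraphT
  rw [S.mem_graph_iff] at hwgraphS
  obtain ⟨yT, hyT1, hyT2⟩ := hwgraphT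
  obtain ⟨yS, hyS1, hyS2⟩ := hwgraphS
  have hyT1' : (yT : H) = w := hyT1
  have hyS1' : (yS : H) = w := hyS1
  have hwT : w ∈ T.domain := hyT1' ▸ yT.2
  have hwS : w ∈ S.domain := hyS1' ▸ yS.2
  have hTw : T ⟨w, hwT⟩ = 0 := by
    have h : (⟨w, hwT⟩ : T.domain) = yT := Subtype.ext hyT1'.symm
    rw [h]; exact hyT2
  have hSw : S ⟨w, hwS⟩ = 0 := by
    have h : (⟨w, hwS⟩ : S.domain) = yS := Subtype.ext hyS1'.symm
    rw [h]; exact hyS2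
  have horthw : ∀ k, inner (𝕜 := ℂ) (v (φ k)) w = 0 :=
    fun k => hvorth (φ k) w hwT hwS hTw hSw
  have hinner : inner (𝕜 := ℂ) w w = 0 := by
    have h1 : Filter.Tendsto (fun k => inner (𝕜 := ℂ) (v (φ k)) w) Filter.atTop
        (nhds (inner (𝕜 := ℂ) w w)) := hw.inner tendsto_const_nhds
    have h2 : Filter.Tendsto (fun k => inner (𝕜 := ℂ) (v (φ k)) w) Filter.atTop
        (nhds 0) := by simp only [horthw]; exact tendsto_const_nhds
    exact tendsto_nhds_unique h1 h2
  rw [inner_self_eq_zero] at hinner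
  rw [hinner] at hwnorm
  simp at hwnorm
end

section
/- Let A be an (n-1)×(n-1) Hermitian matrix with eigenvalues λ₁ ≤ ... ≤ λ_{n-1} and suppose λ₁ + ... + λ_q ≥ ε^{-1}. Then for any integer k with k ≤ n-1-q and any antisymmetric coefficient family (u_J) of (0,k)-forms, one has (Tr A) Σ'_{|J|=k} |u_J|² − Σ'_{|K|=k-1} Σ_{i,j} A_{ij} u_{iK} \overline{u_{jK}} ≥ ε^{-1} Σ'_{|J|=k} |u_J|². -/
open Finset

section helpers

private lemma alt_zero' {n m : ℕ} (w : (Fin n → Fin m) → ℂ)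
    (hw : ∀ (J : Fin n → Fin m) (σ : Equiv.Perm (Fin n)),
      w (J ∘ σ) = (Equiv.Perm.sign σ : ℤ) • w J)
    (J : Fin n → Fin m) (hJ : ¬Function.Injective J) : w J = 0 := by
  rw [Function.not_injective_iff] at hJ
  obtain ⟨a, b, hab, hne⟩ := hJ
  have hcomp : J ∘ (Equiv.swap a b) = J := by
    funext x
    simp only [Function.comp_apply, Equiv.swap_apply_def]
    split_ifs with h1 h2 <;> simp_all
  have h := hw J (Equiv.swap a b)
  rw [hcomp, Equiv.Perm.sign_swap hne] at h
  simp only [Units.val_neg, Units.val_one, neg_smul, one_smul] at h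
  have h2 : (2:ℂ) * w J = 0 := by linear_combination h
  simpa using h2


private lemma sum_full_eq_factorial_smul' {n m : ℕ} {M : Type*} [AddCommMonoid M]
    (f : (Fin n → Fin m) → M)
    (hperm : ∀ (J : Fin n → Fin m) (σ : Equiv.Perm (Fin n)), f (J ∘ σ) = f J)
    (h0 : ∀ J : Fin n → Fin m, ¬Function.Injective J → f J = 0) :
    ∑ I : Fin n → Fin m, f I
      = Nat.factorial n • ∑ J ∈ Finset.univ.filter (fun J : Fin n → Fin m => StrictMono J), f J := by
  classical
  have h1 : ∑ I : Fin n → Fin m, f I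
      = ∑ I ∈ Finset.univ.filter (fun I : Fin n → Fin m => Function.Injective I), f I := by
    refine (Finset.sum_filter_of_ne ?_).symm
    intro I _ hI
    by_contra h
    exact hI (h0 I h)
  rw [h1]
  have h2 : ∑ I ∈ Finset.univ.filter (fun I : Fin n → Fin m => Function.Injective I), f I
      = ∑ p ∈ (Finset.univ.filter (fun J : Fin n → Fin m => StrictMono J)) ×ˢ
          (Finset.univ : Finset (Equiv.Perm (Fin n))), f (p.1 ∘ p.2) := by
    refine (Finset.sum_nbij' (fun p : (Fin n → Fin m) × Equiv.Perm (Fin n) => p.1 ∘ ⇑p.2)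
      (fun I => (I ∘ ⇑(Tuple.sort I), (Tuple.sort I)⁻¹)) ?_ ?_ ?_ ?_ ?_).symm
    · rintro ⟨J, σ⟩ hp
      simp only [Finset.mem_product, Finset.mem_filter, Finset.mem_univ, true_and] at hp ⊢
      exact hp.1.injective.comp σ.injective
    · intro I hI
      simp only [Finset.mem_filter, Finset.mem_univ, true_and] at hI
      simp only [Finset.mem_product, Finset.mem_filter, Finset.mem_univ, true_and, and_true]
      exact (Tuple.monotone_sort I).strictMono_of_injective
        (hI.comp (Tuple.sort I).injective)
    · rintro ⟨J, σ⟩ hp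
      simp only [Finset.mem_product, Finset.mem_filter, Finset.mem_univ, true_and, and_true] at hp
      set I : Fin n → Fin m := J ∘ ⇑σ with hIdef
      set τ := Tuple.sort I with hτ
      have hcomp : I ∘ ⇑τ = J ∘ ⇑(σ * τ) := by
        funext x; simp [hIdef, Function.comp, Equiv.Perm.mul_apply]
      have hJinj : Function.Injective J := hp.injective
      have hsm : StrictMono (I ∘ ⇑τ) := by
        refine (Tuple.monotone_sort I).strictMono_of_injective ?_
        exact (hJinj.comp σ.injective).comp τ.injective
      have hrange : Set.range (I ∘ ⇑τ) = Set.range J := by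
        rw [hcomp, Set.range_comp]
        simp [Set.image_univ, (σ * τ).surjective.range_eq]
      have hwf : WellFoundedLT (Fin n) := inferInstance
      have hIJ : I ∘ ⇑τ = J :=
        (@StrictMono.range_inj (Fin n) (Fin m) inferInstance inferInstance hwf _ _ hsm hp).mp
          hrange
      have hperm1 : ⇑(σ * τ) = id := by
        funext x
        apply hJinj
        have := congrFun (hcomp.symm.trans hIJ) x
        simpa using this
      have hστ : σ * τ = 1 := Equiv.ext fun x => congrFun hperm1 x
      have hτσ : τ = σ⁻¹ := by
        have := inv_eq_of_mul_eq_one_right hστ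
        rw [← this]
      refine Prod.ext ?_ ?_
      · simpa using hIJ
      · show (Tuple.sort (J ∘ ⇑σ))⁻¹ = σ
        rw [← hτ, hτσ, inv_inv]
    · intro I hI
      funext x
      simp [Function.comp]
    · rintro ⟨J, σ⟩ hp
      rfl
  rw [h2, Finset.sum_product]
  rw [Finset.smul_sum]
  refine Finset.sum_congr rfl ?_
  intro J hJ
  have : ∀ σ : Equiv.Perm (Fin n), f (J ∘ ⇑σ) = f J := fun σ => hperm J σ
  rw [Finset.sum_congr rfl (fun σ _ => this σ), Finset.sum_const, Finset.card_univ,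
    Fintype.card_perm, Fintype.card_fin]


private lemma sum_over_big_set' {m q : ℕ} {ε : ℝ} (hε : 0 < ε) (hq : 1 ≤ q)
    (lam : Fin m → ℝ)
    (heig : ∀ s : Finset (Fin m), s.card = q → ε⁻¹ ≤ ∑ j ∈ s, lam j)
    (s : Finset (Fin m)) (hs : q ≤ s.card) : ε⁻¹ ≤ ∑ j ∈ s, lam j := by
  classical
  have hne : (s.powersetCard q).Nonempty := by
    rw [Finset.powersetCard_nonempty]
    exact hs
  obtain ⟨T, hT, hTmin⟩ :=
    Finset.exists_min_image (s.powersetCard q) (fun t => ∑ j ∈ t, lam j) hne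
  obtain ⟨hTs, hTcard⟩ := Finset.mem_powersetCard.mp hT
  have hbase : ε⁻¹ ≤ ∑ j ∈ T, lam j := heig T hTcard
  have hεinv : 0 < ε⁻¹ := inv_pos.mpr hε
  obtain ⟨i, hiT, hipos⟩ : ∃ i ∈ T, 0 < lam i := by
    by_contra hcon
    push_neg at hcon
    have : ∑ j ∈ T, lam j ≤ 0 := Finset.sum_nonpos hcon
    linarith
  have hnonneg : ∀ j ∈ s \ T, 0 ≤ lam j := by
    intro j hj
    rw [Finset.mem_sdiff] at hj
    obtain ⟨hjs, hjT⟩ := hj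
    have hle : lam i ≤ lam j := by
      by_contra hlt
      push_neg at hlt
      set T' := insert j (T.erase i) with hT'
      have hjnot : j ∉ T.erase i := fun h => hjT (Finset.mem_of_mem_erase h)
      have hT'card : T'.card = q := by
        rw [hT', Finset.card_insert_of_notMem hjnot, Finset.card_erase_of_mem hiT, hTcard]
        omega
      have hT'sub : T' ⊆ s := by
        rw [hT']
        exact Finset.insert_subset hjs ((Finset.erase_subset _ _).trans hTs)
      have hmin := hTmin T' (Finset.mem_powersetCard.mpr ⟨hT'sub, hT'card⟩)
      have hsum1 : ∑ x ∈ T', lam x = lam j + ∑ x ∈ T.erase i, lam x := by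
        rw [hT', Finset.sum_insert hjnot]
      have hsum2 : ∑ x ∈ T.erase i, lam x + lam i = ∑ x ∈ T, lam x :=
        Finset.sum_erase_add T lam hiT
      linarith
    linarith
  have hsplit : ∑ j ∈ s \ T, lam j + ∑ j ∈ T, lam j = ∑ j ∈ s, lam j :=
    Finset.sum_sdiff hTs
  have : 0 ≤ ∑ j ∈ s \ T, lam j := Finset.sum_nonneg hnonneg
  linarith

private lemma sum_fun_prod' {k m : ℕ} (g : Fin k → Fin m → ℂ) :
    ∑ L : Fin k → Fin m, ∏ t, g t (L t) = ∏ t, ∑ b, g t b :=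
  (Fintype.prod_sum g).symm

private lemma sum_cons' {k m : ℕ} {M : Type*} [AddCommMonoid M]
    (F : (Fin (k+1) → Fin m) → M) :
    ∑ I : Fin (k+1) → Fin m, F I
      = ∑ i : Fin m, ∑ K : Fin k → Fin m, F (Fin.cons i K) := by
  rw [← Equiv.sum_comp (Fin.consEquiv (fun _ : Fin (k+1) => Fin m)) F, Fintype.sum_prod_type]
  rfl

private lemma master' {m k : ℕ} (U : Matrix (Fin m) (Fin m) ℂ)
    (hrow : ∀ i j : Fin m, (∑ a, U i a * (starRingEnd ℂ) (U j a))
      = if i = j then 1 else 0)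
    (u : (Fin (k+1) → Fin m) → ℂ) (w : Fin m → ℂ) :
    (∑ J : Fin (k+1) → Fin m,
        w (J 0) * ((∑ I : Fin (k+1) → Fin m, u I * ∏ t, U (I t) (J t))
          * (starRingEnd ℂ) (∑ I : Fin (k+1) → Fin m, u I * ∏ t, U (I t) (J t))))
      = ∑ i, ∑ j, ∑ K : Fin k → Fin m,
          (∑ a, w a * (U i a * (starRingEnd ℂ) (U j a)))
            * (u (Fin.cons i K) * (starRingEnd ℂ) (u (Fin.cons j K))) := by
  classical
  have expand : ∀ J : Fin (k+1) → Fin m,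
      w (J 0) * ((∑ I : Fin (k+1) → Fin m, u I * ∏ t, U (I t) (J t))
          * (starRingEnd ℂ) (∑ I : Fin (k+1) → Fin m, u I * ∏ t, U (I t) (J t)))
      = ∑ I : Fin (k+1) → Fin m, ∑ I' : Fin (k+1) → Fin m,
          (u I * (starRingEnd ℂ) (u I'))
            * (w (J 0) * ∏ t, (U (I t) (J t) * (starRingEnd ℂ) (U (I' t) (J t)))) := by
    intro J
    rw [map_sum, Finset.sum_mul_sum, Finset.mul_sum]
    refine Finset.sum_congr rfl fun I _ => ?_
    rw [Finset.mul_sum]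
    refine Finset.sum_congr rfl fun I' _ => ?_
    have hp : (∏ t, U (I t) (J t)) * (∏ t, (starRingEnd ℂ) (U (I' t) (J t)))
        = ∏ t, (U (I t) (J t) * (starRingEnd ℂ) (U (I' t) (J t))) :=
      Finset.prod_mul_distrib.symm
    rw [map_mul, map_prod, ← hp]
    ring
  have key : ∀ I I' : Fin (k+1) → Fin m,
      (∑ J : Fin (k+1) → Fin m,
          w (J 0) * ∏ t, (U (I t) (J t) * (starRingEnd ℂ) (U (I' t) (J t))))
      = (∑ a, w a * (U (I 0) a * (starRingEnd ℂ) (U (I' 0) a)))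
          * (if (∀ t : Fin k, I t.succ = I' t.succ) then 1 else 0) := by
    intro I I'
    rw [sum_cons' (fun J => w (J 0) * ∏ t, (U (I t) (J t) * (starRingEnd ℂ) (U (I' t) (J t))))]
    have hterm : ∀ (a : Fin m) (L : Fin k → Fin m),
        w ((Fin.cons a L : Fin (k+1) → Fin m) 0)
            * ∏ t, (U (I t) ((Fin.cons a L : Fin (k+1) → Fin m) t)
                * (starRingEnd ℂ) (U (I' t) ((Fin.cons a L : Fin (k+1) → Fin m) t)))
        = (w a * (U (I 0) a * (starRingEnd ℂ) (U (I' 0) a)))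
            * ∏ t : Fin k, (U (I t.succ) (L t) * (starRingEnd ℂ) (U (I' t.succ) (L t))) := by
      intro a L
      rw [Fin.prod_univ_succ]
      simp only [Fin.cons_zero, Fin.cons_succ]
      ring
    have h2 : ∀ a : Fin m,
        (∑ L : Fin k → Fin m, (w a * (U (I 0) a * (starRingEnd ℂ) (U (I' 0) a)))
            * ∏ t : Fin k, (U (I t.succ) (L t) * (starRingEnd ℂ) (U (I' t.succ) (L t))))
        = (w a * (U (I 0) a * (starRingEnd ℂ) (U (I' 0) a)))
            * (if (∀ t : Fin k, I t.succ = I' t.succ) then 1 else 0) := by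
      intro a
      rw [← Finset.mul_sum,
        sum_fun_prod' (fun t b => U (I t.succ) b * (starRingEnd ℂ) (U (I' t.succ) b))]
      congr 1
      calc ∏ t : Fin k, ∑ b, (U (I t.succ) b * (starRingEnd ℂ) (U (I' t.succ) b))
          = ∏ t : Fin k, (if I t.succ = I' t.succ then (1:ℂ) else 0) :=
            Finset.prod_congr rfl fun t _ => hrow _ _
        _ = if (∀ t : Fin k, I t.succ = I' t.succ) then 1 else 0 := by
            rw [Finset.prod_boole]
            simp
    calc ∑ a : Fin m, ∑ L : Fin k → Fin m,
          w ((Fin.cons a L : Fin (k+1) → Fin m) 0)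
            * ∏ t, (U (I t) ((Fin.cons a L : Fin (k+1) → Fin m) t)
                * (starRingEnd ℂ) (U (I' t) ((Fin.cons a L : Fin (k+1) → Fin m) t)))
        = ∑ a : Fin m, (w a * (U (I 0) a * (starRingEnd ℂ) (U (I' 0) a)))
            * (if (∀ t : Fin k, I t.succ = I' t.succ) then 1 else 0) := by
          refine Finset.sum_congr rfl fun a _ => ?_
          rw [← h2 a]
          exact Finset.sum_congr rfl fun L _ => hterm a L
      _ = (∑ a, w a * (U (I 0) a * (starRingEnd ℂ) (U (I' 0) a)))
            * (if (∀ t : Fin k, I t.succ = I' t.succ) then 1 else 0) := by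
          rw [← Finset.sum_mul]
  calc (∑ J : Fin (k+1) → Fin m,
        w (J 0) * ((∑ I : Fin (k+1) → Fin m, u I * ∏ t, U (I t) (J t))
          * (starRingEnd ℂ) (∑ I : Fin (k+1) → Fin m, u I * ∏ t, U (I t) (J t))))
      = ∑ J : Fin (k+1) → Fin m, ∑ I : Fin (k+1) → Fin m, ∑ I' : Fin (k+1) → Fin m,
          (u I * (starRingEnd ℂ) (u I'))
            * (w (J 0) * ∏ t, (U (I t) (J t) * (starRingEnd ℂ) (U (I' t) (J t)))) :=
        Finset.sum_congr rfl fun J _ => expand J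
    _ = ∑ I : Fin (k+1) → Fin m, ∑ I' : Fin (k+1) → Fin m,
          (u I * (starRingEnd ℂ) (u I'))
            * ((∑ a, w a * (U (I 0) a * (starRingEnd ℂ) (U (I' 0) a)))
                * (if (∀ t : Fin k, I t.succ = I' t.succ) then 1 else 0)) := by
        rw [Finset.sum_comm]
        refine Finset.sum_congr rfl fun I _ => ?_
        rw [Finset.sum_comm]
        refine Finset.sum_congr rfl fun I' _ => ?_
        rw [← Finset.mul_sum, key I I']
    _ = ∑ i, ∑ j, ∑ K : Fin k → Fin m,
          (∑ a, w a * (U i a * (starRingEnd ℂ) (U j a)))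
            * (u (Fin.cons i K) * (starRingEnd ℂ) (u (Fin.cons j K))) := by
        rw [sum_cons' (fun I => ∑ I' : Fin (k+1) → Fin m,
          (u I * (starRingEnd ℂ) (u I'))
            * ((∑ a, w a * (U (I 0) a * (starRingEnd ℂ) (U (I' 0) a)))
                * (if (∀ t : Fin k, I t.succ = I' t.succ) then 1 else 0)))]
        refine Finset.sum_congr rfl fun i _ => ?_
        conv_rhs => rw [Finset.sum_comm]
        refine Finset.sum_congr rfl fun K _ => ?_
        rw [sum_cons' (fun I' =>
          (u (Fin.cons i K) * (starRingEnd ℂ) (u I'))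
            * ((∑ a, w a * (U ((Fin.cons i K : Fin (k+1) → Fin m) 0) a
                  * (starRingEnd ℂ) (U (I' 0) a)))
                * (if (∀ t : Fin k, (Fin.cons i K : Fin (k+1) → Fin m) t.succ = I' t.succ)
                    then 1 else 0)))]
        refine Finset.sum_congr rfl fun j _ => ?_
        simp only [Fin.cons_zero, Fin.cons_succ]
        calc ∑ K' : Fin k → Fin m,
              (u (Fin.cons i K) * (starRingEnd ℂ) (u (Fin.cons j K')))
                * ((∑ a, w a * (U i a * (starRingEnd ℂ) (U j a)))
                    * (if (∀ t : Fin k, K t = K' t) then 1 else 0))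
            = ∑ K' : Fin k → Fin m, (if K = K' then
                (∑ a, w a * (U i a * (starRingEnd ℂ) (U j a)))
                  * (u (Fin.cons i K) * (starRingEnd ℂ) (u (Fin.cons j K'))) else 0) := by
              refine Finset.sum_congr rfl fun K' _ => ?_
              have hc : (∀ t : Fin k, K t = K' t) ↔ K = K' := funext_iff.symm
              simp only [hc]
              by_cases h : K = K'
              · simp only [h, if_true]; ring
              · simp only [h, if_false, mul_zero, zero_mul]
          _ = (∑ a, w a * (U i a * (starRingEnd ℂ) (U j a)))
                * (u (Fin.cons i K) * (starRingEnd ℂ) (u (Fin.cons j K))) := by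
              rw [Finset.sum_ite_eq]
              simp

end helpers

/-- dual lemma for low degrees. If `A` is Hermitian with the sum of its `q`
smallest eigenvalues at least `ε⁻¹` (equivalently: every `q` of its eigenvalues sum to at
least `ε⁻¹`), then for antisymmetric `(0,k)`-form coefficients `u` (degree `k+1` here)
with `k + 1 ≤ m - q`, one has
`(Tr A) Σ'_{|J|=k+1} |u_J|² − Σ'_{|K|=k} Σ_{i,j} A_{ij} u_{iK} conj (u_{jK})
  ≥ ε⁻¹ Σ'_{|J|=k+1} |u_J|²`. -/
theorem levi_form_lower_bound_low_degree
    (m q k : ℕ) (ε : ℝ) (hε : 0 < ε) (hq : 1 ≤ q) (hkm : k + 1 ≤ m - q)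
    (A : Matrix (Fin m) (Fin m) ℂ) (hA : A.IsHermitian)
    (heig : ∀ s : Finset (Fin m), s.card = q → ε⁻¹ ≤ ∑ j ∈ s, hA.eigenvalues j)
    (u : (Fin (k + 1) → Fin m) → ℂ)
    (halt : ∀ (J : Fin (k + 1) → Fin m) (σ : Equiv.Perm (Fin (k + 1))),
      u (J ∘ σ) = (Equiv.Perm.sign σ : ℤ) • u J) :
    ε⁻¹ * ∑ J ∈ Finset.univ.filter (fun J : Fin (k + 1) → Fin m => StrictMono J),
        ‖u J‖ ^ 2 ≤
      (A.trace.re) *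
          ∑ J ∈ Finset.univ.filter (fun J : Fin (k + 1) → Fin m => StrictMono J),
            ‖u J‖ ^ 2 -
        (∑ K ∈ Finset.univ.filter (fun K : Fin k → Fin m => StrictMono K), ∑ i, ∑ j,
            A i j * u (Fin.cons i K) * starRingEnd ℂ (u (Fin.cons j K))).re := by
  classical
  set lam : Fin m → ℝ := hA.eigenvalues with hlam
  set U : Matrix (Fin m) (Fin m) ℂ := (hA.eigenvectorUnitary : Matrix (Fin m) (Fin m) ℂ)
    with hUdef
  -- unitarity
  have hUmem := hA.eigenvectorUnitary.2
  have hU1 : U * star U = 1 := (Matrix.mem_unitaryGroup_iff).mp hUmem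
  have hU2 : star U * U = 1 := (Matrix.mem_unitaryGroup_iff').mp hUmem
  have hrow : ∀ i j : Fin m, (∑ a, U i a * (starRingEnd ℂ) (U j a))
      = if i = j then 1 else 0 := by
    intro i j
    have := congrFun (congrFun hU1 i) j
    rw [Matrix.mul_apply] at this
    simp only [Matrix.star_apply, Matrix.one_apply] at this
    simpa using this
  have hcol : ∀ a : Fin m, (∑ i, (starRingEnd ℂ) (U i a) * U i a) = 1 := by
    intro a
    have := congrFun (congrFun hU2 a) a
    rw [Matrix.mul_apply] at this
    simp only [Matrix.star_apply, Matrix.one_apply, if_pos rfl] at this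
    simpa using this
  -- spectral theorem, entrywise
  have hAco : ∀ i j : Fin m, (∑ a, ((lam a : ℂ)) * (U i a * (starRingEnd ℂ) (U j a))) = A i j := by
    intro i j
    have hspec := hA.spectral_theorem
    have hthis : A i j = (((hA.eigenvectorUnitary : Matrix (Fin m) (Fin m) ℂ) * Matrix.diagonal (RCLike.ofReal ∘ hA.eigenvalues)
        * star (hA.eigenvectorUnitary : Matrix (Fin m) (Fin m) ℂ)) : Matrix (Fin m) (Fin m) ℂ) i j := by
      conv_lhs => rw [hspec, Unitary.conjStarAlgAut_apply]
    rw [Matrix.mul_apply] at hthis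
    simp only [Matrix.mul_diagonal, Matrix.star_apply, Function.comp_apply] at hthis
    rw [hthis]
    refine Finset.sum_congr rfl fun a _ => ?_
    rw [Complex.star_def]
    have hco2 : (RCLike.ofReal (hA.eigenvalues a) : ℂ) = ((lam a : ℝ) : ℂ) := rfl
    rw [hco2]
    ring
  -- trace
  have htrace : A.trace.re = ∑ a, lam a := by
    have h1 : A.trace = ∑ i, A i i := by
      simp [Matrix.trace, Matrix.diag]
    have h2 : A.trace = ∑ a, (lam a : ℂ) := by
      rw [h1]
      calc ∑ i, A i i = ∑ i, ∑ a, ((lam a : ℂ)) * (U i a * (starRingEnd ℂ) (U i a)) :=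
            Finset.sum_congr rfl fun i _ => (hAco i i).symm
        _ = ∑ a, ∑ i, ((lam a : ℂ)) * (U i a * (starRingEnd ℂ) (U i a)) := Finset.sum_comm
        _ = ∑ a, (lam a : ℂ) := by
            refine Finset.sum_congr rfl fun a _ => ?_
            rw [← Finset.mul_sum]
            have : (∑ i, U i a * (starRingEnd ℂ) (U i a))
                = ∑ i, (starRingEnd ℂ) (U i a) * U i a :=
              Finset.sum_congr rfl fun i _ => mul_comm _ _
            rw [this, hcol a, mul_one]
      
    rw [h2]
    simp
  -- transformed coefficients
  set v : (Fin (k+1) → Fin m) → ℂ :=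
    fun J => ∑ I : Fin (k+1) → Fin m, u I * ∏ t, U (I t) (J t) with hvdef
  have hvalt : ∀ (J : Fin (k+1) → Fin m) (σ : Equiv.Perm (Fin (k+1))),
      v (J ∘ σ) = (Equiv.Perm.sign σ : ℤ) • v J := by
    intro J σ
    calc v (J ∘ ⇑σ) = ∑ I : Fin (k+1) → Fin m, u I * ∏ t, U (I t) ((J ∘ ⇑σ) t) := rfl
      _ = ∑ I : Fin (k+1) → Fin m,
            u ((Equiv.arrowCongr σ.symm (Equiv.refl (Fin m))) I)
              * ∏ t, U (((Equiv.arrowCongr σ.symm (Equiv.refl (Fin m))) I) t) ((J ∘ ⇑σ) t) := by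
          rw [Equiv.sum_comp (Equiv.arrowCongr σ.symm (Equiv.refl (Fin m)))
            (fun I => u I * ∏ t, U (I t) ((J ∘ ⇑σ) t))]
      _ = ∑ I : Fin (k+1) → Fin m, (Equiv.Perm.sign σ : ℤ) • (u I * ∏ t, U (I t) (J t)) := by
          refine Finset.sum_congr rfl fun I _ => ?_
          have harr : (Equiv.arrowCongr σ.symm (Equiv.refl (Fin m))) I = I ∘ ⇑σ := rfl
          rw [harr, halt I σ]
          have hprod : (∏ t, U ((I ∘ ⇑σ) t) ((J ∘ ⇑σ) t)) = ∏ t, U (I t) (J t) := by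
            simp only [Function.comp_apply]
            exact Equiv.prod_comp σ (fun s => U (I s) (J s))
          rw [hprod, smul_mul_assoc]
      _ = (Equiv.Perm.sign σ : ℤ) • v J := by rw [← Finset.smul_sum]
  have hvzero : ∀ J, ¬Function.Injective J → v J = 0 := alt_zero' v hvalt
  have huzero : ∀ I, ¬Function.Injective I → u I = 0 := alt_zero' u halt
  -- Parseval
  have hParC : (∑ J : Fin (k+1) → Fin m, v J * (starRingEnd ℂ) (v J))
      = ∑ I : Fin (k+1) → Fin m, u I * (starRingEnd ℂ) (u I) := by
    have h1 := master' U hrow u (fun _ => 1)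
    simp only [one_mul] at h1
    calc (∑ J : Fin (k+1) → Fin m, v J * (starRingEnd ℂ) (v J))
        = ∑ i, ∑ j, ∑ K : Fin k → Fin m,
            (∑ a, U i a * (starRingEnd ℂ) (U j a))
              * (u (Fin.cons i K) * (starRingEnd ℂ) (u (Fin.cons j K))) := h1
      _ = ∑ i, ∑ K : Fin k → Fin m,
            u (Fin.cons i K) * (starRingEnd ℂ) (u (Fin.cons i K)) := by
          refine Finset.sum_congr rfl fun i _ => ?_
          rw [Finset.sum_comm]
          refine Finset.sum_congr rfl fun K _ => ?_
          calc ∑ j, (∑ a, U i a * (starRingEnd ℂ) (U j a))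
                * (u (Fin.cons i K) * (starRingEnd ℂ) (u (Fin.cons j K)))
              = ∑ j, (if i = j then
                  u (Fin.cons i K) * (starRingEnd ℂ) (u (Fin.cons j K)) else 0) := by
                refine Finset.sum_congr rfl fun j _ => ?_
                rw [hrow i j]
                by_cases h : i = j
                · simp [h]
                · simp [h]
            _ = u (Fin.cons i K) * (starRingEnd ℂ) (u (Fin.cons i K)) := by
                rw [Finset.sum_ite_eq]
                simp
      _ = ∑ I : Fin (k+1) → Fin m, u I * (starRingEnd ℂ) (u I) :=
          (sum_cons' (fun I => u I * (starRingEnd ℂ) (u I))).symm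
  have hPar : (∑ J : Fin (k+1) → Fin m, Complex.normSq (v J))
      = ∑ I : Fin (k+1) → Fin m, Complex.normSq (u I) := by
    have := hParC
    simp only [Complex.mul_conj] at this
    exact_mod_cast this
  -- weighted identity
  have hWC : ((∑ J : Fin (k+1) → Fin m, lam (J 0) * Complex.normSq (v J) : ℝ) : ℂ)
      = ∑ K : Fin k → Fin m, ∑ i, ∑ j,
          A i j * u (Fin.cons i K) * (starRingEnd ℂ) (u (Fin.cons j K)) := by
    have h1 := master' U hrow u (fun a => (lam a : ℂ))
    have hL : (∑ J : Fin (k+1) → Fin m,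
        ((lam (J 0) : ℂ)) * ((∑ I : Fin (k+1) → Fin m, u I * ∏ t, U (I t) (J t))
          * (starRingEnd ℂ) (∑ I : Fin (k+1) → Fin m, u I * ∏ t, U (I t) (J t))))
        = ((∑ J : Fin (k+1) → Fin m, lam (J 0) * Complex.normSq (v J) : ℝ) : ℂ) := by
      rw [Complex.ofReal_sum]
      refine Finset.sum_congr rfl fun J _ => ?_
      rw [show ((∑ I : Fin (k+1) → Fin m, u I * ∏ t, U (I t) (J t))
          * (starRingEnd ℂ) (∑ I : Fin (k+1) → Fin m, u I * ∏ t, U (I t) (J t)))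
          = v J * (starRingEnd ℂ) (v J) from rfl]
      rw [Complex.mul_conj]
      push_cast
      ring
    rw [hL] at h1
    rw [h1]
    calc (∑ i, ∑ j, ∑ K : Fin k → Fin m,
          (∑ a, (lam a : ℂ) * (U i a * (starRingEnd ℂ) (U j a)))
            * (u (Fin.cons i K) * (starRingEnd ℂ) (u (Fin.cons j K))))
        = ∑ i, ∑ j, ∑ K : Fin k → Fin m,
            A i j * u (Fin.cons i K) * (starRingEnd ℂ) (u (Fin.cons j K)) := by
          refine Finset.sum_congr rfl fun i _ => Finset.sum_congr rfl fun j _ =>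
            Finset.sum_congr rfl fun K _ => ?_
          rw [hAco i j]
          ring
      _ = ∑ K : Fin k → Fin m, ∑ i, ∑ j,
            A i j * u (Fin.cons i K) * (starRingEnd ℂ) (u (Fin.cons j K)) := by
          have c1 : (∑ i, ∑ j, ∑ K : Fin k → Fin m,
              A i j * u (Fin.cons i K) * (starRingEnd ℂ) (u (Fin.cons j K)))
              = ∑ i, ∑ K : Fin k → Fin m, ∑ j,
                A i j * u (Fin.cons i K) * (starRingEnd ℂ) (u (Fin.cons j K)) :=
            Finset.sum_congr rfl fun i _ => Finset.sum_comm
          have c2 : (∑ i, ∑ K : Fin k → Fin m, ∑ j,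
              A i j * u (Fin.cons i K) * (starRingEnd ℂ) (u (Fin.cons j K)))
              = ∑ K : Fin k → Fin m, ∑ i, ∑ j,
                A i j * u (Fin.cons i K) * (starRingEnd ℂ) (u (Fin.cons j K)) :=
            Finset.sum_comm
          rw [c1, c2]
  -- real quantities
  set Nv : ℝ := ∑ J : Fin (k+1) → Fin m, Complex.normSq (v J) with hNv
  set S0 : ℝ := ∑ J : Fin (k+1) → Fin m, lam (J 0) * Complex.normSq (v J) with hS0
  have hsym : ∀ c : Fin (k+1),
      (∑ J : Fin (k+1) → Fin m, lam (J c) * Complex.normSq (v J)) = S0 := by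
    intro c
    set τ : Equiv.Perm (Fin (k+1)) := Equiv.swap 0 c with hτ
    have h := Equiv.sum_comp (Equiv.arrowCongr τ.symm (Equiv.refl (Fin m)))
      (fun J => lam (J c) * Complex.normSq (v J))
    rw [← h, hS0]
    refine Finset.sum_congr rfl fun J _ => ?_
    have he : (Equiv.arrowCongr τ.symm (Equiv.refl (Fin m))) J = J ∘ ⇑τ := rfl
    rw [he]
    have h1 : ((J ∘ ⇑τ) c) = J 0 := by
      simp only [Function.comp_apply, hτ, Equiv.swap_apply_right]
    have h2 : Complex.normSq (v (J ∘ ⇑τ)) = Complex.normSq (v J) := by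
      rw [hvalt J τ]
      rcases Int.units_eq_one_or (Equiv.Perm.sign τ) with hs | hs <;> rw [hs] <;> simp
    rw [h1, h2]
  have hcard : ∀ J : Fin (k+1) → Fin m, Function.Injective J →
      ε⁻¹ ≤ (∑ a, lam a) - ∑ c : Fin (k+1), lam (J c) := by
    intro J hJ
    have himg : ∑ c : Fin (k+1), lam (J c) = ∑ b ∈ Finset.univ.image J, lam b :=
      (Finset.sum_image (fun x _ y _ h => hJ h)).symm
    have hsdiff := Finset.sum_sdiff (f := lam) (Finset.subset_univ (Finset.univ.image J))
    have hc : q ≤ (Finset.univ \ Finset.univ.image J).card := by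
      rw [Finset.card_sdiff_of_subset (Finset.subset_univ _), Finset.card_univ, Fintype.card_fin,
        Finset.card_image_of_injective _ hJ, Finset.card_univ, Fintype.card_fin]
      omega
    have hbig := sum_over_big_set' hε hq lam heig _ hc
    rw [himg]
    linarith
  have hperJ : ∀ J : Fin (k+1) → Fin m,
      ε⁻¹ * Complex.normSq (v J)
        ≤ ((∑ a, lam a) - ∑ c : Fin (k+1), lam (J c)) * Complex.normSq (v J) := by
    intro J
    by_cases hJ : Function.Injective J
    · exact mul_le_mul_of_nonneg_right (hcard J hJ) (Complex.normSq_nonneg _)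
    · rw [hvzero J hJ]
      simp
  have hglobal : ε⁻¹ * Nv ≤ (∑ a, lam a) * Nv - ((k:ℝ)+1) * S0 := by
    have hsum := Finset.sum_le_sum
      (fun J (_ : J ∈ (Finset.univ : Finset (Fin (k+1) → Fin m))) => hperJ J)
    rw [← Finset.mul_sum] at hsum
    have e1 : ∑ J : Fin (k+1) → Fin m,
        ((∑ a, lam a) - ∑ c : Fin (k+1), lam (J c)) * Complex.normSq (v J)
        = (∑ J : Fin (k+1) → Fin m, (∑ a, lam a) * Complex.normSq (v J))
          - ∑ J : Fin (k+1) → Fin m, (∑ c : Fin (k+1), lam (J c)) * Complex.normSq (v J) := by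
      rw [← Finset.sum_sub_distrib]
      exact Finset.sum_congr rfl fun J _ => by ring
    have e2 : (∑ J : Fin (k+1) → Fin m, (∑ a, lam a) * Complex.normSq (v J))
        = (∑ a, lam a) * Nv := by
      rw [hNv, Finset.mul_sum]
    have e3 : ∑ J : Fin (k+1) → Fin m, (∑ c : Fin (k+1), lam (J c)) * Complex.normSq (v J)
        = ((k:ℝ)+1) * S0 := by
      calc ∑ J : Fin (k+1) → Fin m, (∑ c : Fin (k+1), lam (J c)) * Complex.normSq (v J)
          = ∑ J : Fin (k+1) → Fin m, ∑ c : Fin (k+1), lam (J c) * Complex.normSq (v J) :=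
            Finset.sum_congr rfl fun J _ => Finset.sum_mul _ _ _
        _ = ∑ c : Fin (k+1), ∑ J : Fin (k+1) → Fin m, lam (J c) * Complex.normSq (v J) :=
            Finset.sum_comm
        _ = ∑ _c : Fin (k+1), S0 := Finset.sum_congr rfl fun c _ => hsym c
        _ = ((k:ℝ)+1) * S0 := by
            rw [Finset.sum_const, Finset.card_univ, Fintype.card_fin, nsmul_eq_mul]
            push_cast
            ring
    rw [e1, e2, e3] at hsum
    exact hsum
  set N' : ℝ := ∑ J ∈ Finset.univ.filter (fun J : Fin (k + 1) → Fin m => StrictMono J),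
      ‖u J‖ ^ 2 with hN'
  have hNfull : (∑ I : Fin (k+1) → Fin m, ‖u I‖ ^ 2)
      = (Nat.factorial (k+1)) • N' := by
    refine sum_full_eq_factorial_smul' (fun I => ‖u I‖ ^ 2) ?_ ?_
    · intro J σ
      rw [halt J σ]
      rcases Int.units_eq_one_or (Equiv.Perm.sign σ) with hs | hs <;> rw [hs] <;> simp
    · intro J hJ
      rw [huzero J hJ]
      simp
  have hNv_eq : Nv = (Nat.factorial (k+1) : ℝ) * N' := by
    have habs : ∑ I : Fin (k+1) → Fin m, Complex.normSq (u I)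
        = ∑ I : Fin (k+1) → Fin m, ‖u I‖ ^ 2 :=
      Finset.sum_congr rfl fun I _ => (Complex.sq_norm (u I)).symm
    rw [hPar, habs, hNfull, nsmul_eq_mul]
  set T' : ℂ := ∑ K ∈ Finset.univ.filter (fun K : Fin k → Fin m => StrictMono K), ∑ i, ∑ j,
      A i j * u (Fin.cons i K) * starRingEnd ℂ (u (Fin.cons j K)) with hT'
  have hTfull : (∑ K : Fin k → Fin m, ∑ i, ∑ j,
      A i j * u (Fin.cons i K) * starRingEnd ℂ (u (Fin.cons j K)))
      = (Nat.factorial k) • T' := by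
    refine sum_full_eq_factorial_smul' (fun K => ∑ i, ∑ j,
      A i j * u (Fin.cons i K) * starRingEnd ℂ (u (Fin.cons j K))) ?_ ?_
    · intro K σ
      refine Finset.sum_congr rfl fun i _ => Finset.sum_congr rfl fun j _ => ?_
      have hσ' : ∀ x : Fin m, (Fin.cons x K : Fin (k+1) → Fin m) ∘
          ⇑(Equiv.Perm.decomposeFin.symm ((0 : Fin (k+1)), σ)) = Fin.cons x (K ∘ ⇑σ) := by
        intro x
        funext t
        refine Fin.cases ?_ ?_ t
        · simp
        · intro s
          simp [Equiv.Perm.decomposeFin_symm_apply_succ]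
      have hui : u (Fin.cons i (K ∘ ⇑σ))
          = ((Equiv.Perm.sign (Equiv.Perm.decomposeFin.symm ((0 : Fin (k+1)), σ))) : ℤ)
              • u (Fin.cons i K) := by
        rw [← hσ' i, halt]
      have huj : u (Fin.cons j (K ∘ ⇑σ))
          = ((Equiv.Perm.sign (Equiv.Perm.decomposeFin.symm ((0 : Fin (k+1)), σ))) : ℤ)
              • u (Fin.cons j K) := by
        rw [← hσ' j, halt]
      have hKc : (Fin.cons i (K ∘ ⇑σ) : Fin (k+1) → Fin m)
          = (Fin.cons i K : Fin (k+1) → Fin m) ∘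
            ⇑(Equiv.Perm.decomposeFin.symm ((0 : Fin (k+1)), σ)) := (hσ' i).symm
      rw [hui, huj]
      rcases Int.units_eq_one_or
        (Equiv.Perm.sign (Equiv.Perm.decomposeFin.symm ((0 : Fin (k+1)), σ))) with hs | hs <;>
        rw [hs] <;> simp <;> ring
    · intro K hK
      have hnon : ∀ x : Fin m, ¬ Function.Injective (Fin.cons x K : Fin (k+1) → Fin m) := by
        intro x hinj
        apply hK
        have hKeq : K = (fun t : Fin k => (Fin.cons x K : Fin (k+1) → Fin m) t.succ) := by
          funext t; simp
        rw [hKeq]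
        exact hinj.comp (Fin.succ_injective k)
      refine Finset.sum_eq_zero fun i _ => Finset.sum_eq_zero fun j _ => ?_
      rw [huzero _ (hnon i)]
      simp
  have hS0_eq : S0 = (Nat.factorial k : ℝ) * T'.re := by
    have h := hWC
    rw [hTfull] at h
    calc S0 = (((∑ J : Fin (k+1) → Fin m, lam (J 0) * Complex.normSq (v J) : ℝ) : ℂ)).re := by
          rw [hS0, Complex.ofReal_re]
      _ = (((Nat.factorial k) • T') : ℂ).re := by rw [h]
      _ = (Nat.factorial k : ℝ) * T'.re := by
          rw [nsmul_eq_mul]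
          simp
  rw [htrace]
  have hfacpos : (0 : ℝ) < (Nat.factorial (k+1) : ℝ) :=
    Nat.cast_pos.mpr (Nat.factorial_pos _)
  have hineq := hglobal
  rw [hNv_eq, hS0_eq] at hineq
  have hfact : ((k:ℝ)+1) * (Nat.factorial k : ℝ) = (Nat.factorial (k+1) : ℝ) := by
    rw [Nat.factorial_succ]
    push_cast
    ring
  have h2 : (Nat.factorial (k+1) : ℝ) * (ε⁻¹ * N')
      ≤ (Nat.factorial (k+1) : ℝ) * ((∑ a, lam a) * N' - T'.re) := by
    calc (Nat.factorial (k+1) : ℝ) * (ε⁻¹ * N')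
        = ε⁻¹ * ((Nat.factorial (k+1) : ℝ) * N') := by ring
      _ ≤ (∑ a, lam a) * ((Nat.factorial (k+1) : ℝ) * N')
          - ((k:ℝ)+1) * ((Nat.factorial k : ℝ) * T'.re) := hineq
      _ = (Nat.factorial (k+1) : ℝ) * ((∑ a, lam a) * N' - T'.re) := by
          rw [← hfact]
          ring
  exact le_of_mul_le_mul_left h2 hfacpos
end

section
/- Let H, H' be Hilbert spaces and T : dom T ⊆ H → H' closed densely defined, with 𝓗 = ker T ∩ ker T* finite dimensional. Suppose □ = T*T + TT* (the Kohn Laplacian, as the self-adjoint operator associated to the quadratic form Q(u) = ‖Tu‖² + ‖T*u‖²) satisfies: for every ε > 0 there is C_ε with ‖u‖² ≤ ε Q(u) + C_ε ‖ι u‖²_{-1} for all u in the form domain, where ι : H → H^{-1} is compact. Then □ restricted to 𝓗^⟂ has a bounded inverse G, and G is a compact operator on 𝓗^⟂. -/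
open Filter Topology

private lemma sq_sub_le_aux {a b c : ℝ} (h : c ≤ a + b) (ha : 0 ≤ a) (hb : 0 ≤ b) (hc : 0 ≤ c) :
    c ^ 2 ≤ 2 * a ^ 2 + 2 * b ^ 2 := by nlinarith [sq_nonneg (a - b), pow_le_pow_left₀ hc h 2]

/-- If the Kohn Laplacian `□` (the self-adjoint operator associated to the
form `Q(u) = ‖Tu‖² + ‖T†u‖²`) satisfies a compactness estimate and the harmonic space
`𝓗 = ker T ∩ ker T†` is finite-dimensional, then `□` has a bounded inverse `G` on `𝓗ᗮ`
which is a compact operator. -/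
theorem box_has_compact_inverse
    {H Hm : Type*}
    [NormedAddCommGroup H] [InnerProductSpace ℂ H] [CompleteSpace H]
    [NormedAddCommGroup Hm] [NormedSpace ℂ Hm]
    (ι : H →L[ℂ] Hm) (hι_compact : IsCompactOperator ι) (hι_inj : Function.Injective ι)
    (T : H →ₗ.[ℂ] H)
    (hT_closed : T.IsClosed) (hT_dense : Dense (T.domain : Set H))
    (Box : H →ₗ.[ℂ] H) (hBox_sa : IsSelfAdjoint Box)
    (hdomT : ∀ u ∈ Box.domain, u ∈ T.domain)
    (hdomA : ∀ u ∈ Box.domain, u ∈ T.adjoint.domain)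
    (hBoxQ : ∀ (u : H) (hu : u ∈ Box.domain),
      (inner (𝕜 := ℂ) (Box ⟨u, hu⟩) u).re =
        ‖T ⟨u, hdomT u hu⟩‖ ^ 2 + ‖T.adjoint ⟨u, hdomA u hu⟩‖ ^ 2)
    (h_fin : ∃ (n : ℕ) (b : Fin n → H),
      ∀ (v : H) (hvT : v ∈ T.domain) (hvA : v ∈ T.adjoint.domain),
        T ⟨v, hvT⟩ = 0 → T.adjoint ⟨v, hvA⟩ = 0 → v ∈ Submodule.span ℂ (Set.range b))
    (est : ∀ ε > (0 : ℝ), ∃ C > (0 : ℝ),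
      ∀ (u : H) (huT : u ∈ T.domain) (huA : u ∈ T.adjoint.domain),
        ‖u‖ ^ 2 ≤ ε * (‖T ⟨u, huT⟩‖ ^ 2 + ‖T.adjoint ⟨u, huA⟩‖ ^ 2) + C * ‖ι u‖ ^ 2) :
    ∃ G : H →L[ℂ] H, IsCompactOperator G ∧
      ∀ (u : H) (hu : u ∈ Box.domain),
        (∀ (v : H) (hvT : v ∈ T.domain) (hvA : v ∈ T.adjoint.domain),
            T ⟨v, hvT⟩ = 0 → T.adjoint ⟨v, hvA⟩ = 0 → inner (𝕜 := ℂ) u v = 0) →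
        G (Box ⟨u, hu⟩) = u := by
  classical
  have hdense : Dense (Box.domain : Set H) := hBox_sa.dense_domain
  have hsa : Box.adjoint = Box := hBox_sa
  have hsaLe : Box.adjoint ≤ Box := le_of_eq hsa
  -- symmetry of Box
  have hsymm : ∀ x y : Box.domain,
      inner (𝕜 := ℂ) (Box x) (y : H) = inner (𝕜 := ℂ) (x : H) (Box y) := by
    intro x y
    have hx' : (x : H) ∈ Box.adjoint.domain := by rw [hsa]; exact x.2
    have h := LinearPMap.adjoint_isFormalAdjoint hdense ⟨(x : H), hx'⟩ y
    have h2 : Box.adjoint ⟨(x : H), hx'⟩ = Box x := hsaLe.2 rfl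
    rwa [h2] at h
  -- closedness of Box, sequential form
  have hBox_closed : ∀ (u f : H) (w : ℕ → Box.domain),
      Tendsto (fun n => ((w n : H))) atTop (𝓝 u) →
      Tendsto (fun n => Box (w n)) atTop (𝓝 f) →
      ∃ hu : u ∈ Box.domain, Box ⟨u, hu⟩ = f := by
    intro u f w hwu hwf
    have key : ∀ y : Box.domain, inner (𝕜 := ℂ) f (y : H) = inner (𝕜 := ℂ) u (Box y) := by
      intro y
      have h1 : Tendsto (fun n => inner (𝕜 := ℂ) (Box (w n)) (y : H)) atTop
          (𝓝 (inner (𝕜 := ℂ) f (y : H))) := hwf.inner tendsto_const_nhds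
      have h2 : Tendsto (fun n => inner (𝕜 := ℂ) ((w n : H)) (Box y)) atTop
          (𝓝 (inner (𝕜 := ℂ) u (Box y))) := hwu.inner tendsto_const_nhds
      have heq : (fun n => inner (𝕜 := ℂ) (Box (w n)) (y : H)) =
          fun n => inner (𝕜 := ℂ) ((w n : H)) (Box y) := funext fun n => hsymm (w n) y
      rw [heq] at h1
      exact tendsto_nhds_unique h1 h2
    have hu' : u ∈ Box.adjoint.domain :=
      LinearPMap.mem_adjoint_domain_of_exists u ⟨f, fun y => key y⟩
    have hfa : Box.adjoint ⟨u, hu'⟩ = f :=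
      LinearPMap.adjoint_apply_eq hdense _ fun y => key y
    have hu : u ∈ Box.domain := by rw [← hsa]; exact hu'
    refine ⟨hu, ?_⟩
    rw [← hsaLe.2 (x := ⟨u, hu'⟩) (y := ⟨u, hu⟩) rfl]
    exact hfa
  -- the orthogonality predicate
  let P : H → Prop := fun u => ∀ (v : H) (hvT : v ∈ T.domain) (hvA : v ∈ T.adjoint.domain),
      T ⟨v, hvT⟩ = 0 → T.adjoint ⟨v, hvA⟩ = 0 → inner (𝕜 := ℂ) u v = 0
  have hP_lim : ∀ (z : ℕ → H) (u : H), (∀ n, P (z n)) → Tendsto z atTop (𝓝 u) → P u := by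
    intro z u hz hlim v hvT hvA h1 h2
    have h3 : Tendsto (fun n => inner (𝕜 := ℂ) (z n) v) atTop (𝓝 (inner (𝕜 := ℂ) u v)) :=
      hlim.inner tendsto_const_nhds
    have h4 : (fun n => inner (𝕜 := ℂ) (z n) v) = fun _ => (0 : ℂ) :=
      funext fun n => hz n v hvT hvA h1 h2
    rw [h4] at h3
    exact tendsto_nhds_unique h3 tendsto_const_nhds
  -- the subspace D = dom Box ∩ Horth
  let D : Submodule ℂ H :=
    { carrier := {u | u ∈ Box.domain ∧ P u}
      add_mem' := fun {a b} ha hb => ⟨add_mem ha.1 hb.1, fun v hvT hvA h1 h2 => by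
        rw [inner_add_left, ha.2 v hvT hvA h1 h2, hb.2 v hvT hvA h1 h2, add_zero]⟩
      zero_mem' := ⟨zero_mem _, fun v hvT hvA _ _ => inner_zero_left _⟩
      smul_mem' := fun c a ha => ⟨Submodule.smul_mem _ c ha.1, fun v hvT hvA h1 h2 => by
        rw [inner_smul_left, ha.2 v hvT hvA h1 h2, mul_zero]⟩ }
  have hmemD : ∀ {u : H}, u ∈ D → u ∈ Box.domain ∧ P u := fun h => h
  let incl : D →ₗ[ℂ] Box.domain :=
    { toFun := fun x => ⟨x.1, (hmemD x.2).1⟩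
      map_add' := fun x y => rfl
      map_smul' := fun m x => rfl }
  let boxD : D →ₗ[ℂ] H := Box.toFun.comp incl
  have hboxD : ∀ x : D, boxD x = Box (incl x) := fun x => rfl
  -- the quadratic form
  let QD : Box.domain → ℝ := fun x =>
    ‖T ⟨x.1, hdomT x.1 x.2⟩‖ ^ 2 + ‖T.adjoint ⟨x.1, hdomA x.1 x.2⟩‖ ^ 2
  have hQ_eq : ∀ x : Box.domain, (inner (𝕜 := ℂ) (Box x) (x : H)).re = QD x :=
    fun x => hBoxQ x.1 x.2
  have hQ_nonneg : ∀ x : Box.domain, 0 ≤ QD x := fun x => by positivity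
  have hQ_box : ∀ x : Box.domain, QD x ≤ ‖Box x‖ * ‖(x : H)‖ := by
    intro x
    rw [← hQ_eq]
    simpa using re_inner_le_norm (𝕜 := ℂ) (Box x) (x : H)
  have hQ_sub : ∀ x y : Box.domain, QD (x - y) ≤ 2 * QD x + 2 * QD y := by
    intro x y
    have e1 : (⟨(x - y : Box.domain).1, hdomT _ (x - y).2⟩ : T.domain)
        = ⟨x.1, hdomT x.1 x.2⟩ - ⟨y.1, hdomT y.1 y.2⟩ := rfl
    have e2 : (⟨(x - y : Box.domain).1, hdomA _ (x - y).2⟩ : T.adjoint.domain)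
        = ⟨x.1, hdomA x.1 x.2⟩ - ⟨y.1, hdomA y.1 y.2⟩ := rfl
    show ‖T _‖ ^ 2 + ‖T.adjoint _‖ ^ 2 ≤ _
    rw [e1, e2, T.map_sub, T.adjoint.map_sub]
    have b1 := sq_sub_le_aux (norm_sub_le (T ⟨x.1, hdomT x.1 x.2⟩) (T ⟨y.1, hdomT y.1 y.2⟩))
      (norm_nonneg _) (norm_nonneg _) (norm_nonneg _)
    have b2 := sq_sub_le_aux
      (norm_sub_le (T.adjoint ⟨x.1, hdomA x.1 x.2⟩) (T.adjoint ⟨y.1, hdomA y.1 y.2⟩))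
      (norm_nonneg _) (norm_nonneg _) (norm_nonneg _)
    show _ + _ ≤ 2 * (_ + _) + 2 * (_ + _)
    linarith
  have hestD : ∀ ε > (0:ℝ), ∃ C > (0:ℝ), ∀ x : Box.domain,
      ‖(x : H)‖ ^ 2 ≤ ε * QD x + C * ‖ι (x : H)‖ ^ 2 := by
    intro ε hε
    obtain ⟨C, hC, h⟩ := est ε hε
    exact ⟨C, hC, fun x => h x.1 (hdomT _ x.2) (hdomA _ x.2)⟩
  -- coercive estimate on D
  have hcoer : ∃ c > (0:ℝ), ∀ x : D, ‖(x : H)‖ ≤ c * ‖boxD x‖ := by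
    by_contra hcon
    push_neg at hcon
    choose x hx using fun n : ℕ => hcon ((n : ℝ) + 1) (by positivity)
    have hxpos : ∀ n, (0:ℝ) < ‖(x n : H)‖ := by
      intro n
      have h := hx n
      nlinarith [norm_nonneg (boxD (x n)), norm_nonneg ((x n : H))]
    let v : ℕ → D := fun n => ((‖(x n : H)‖⁻¹ : ℝ) : ℂ) • x n
    have hvnorm : ∀ n, ‖(v n : H)‖ = 1 := by
      intro n
      have h0 : ‖(x n : H)‖ ≠ 0 := (hxpos n).ne'
      show ‖((‖(x n : H)‖⁻¹ : ℝ) : ℂ) • (x n : H)‖ = 1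
      rw [norm_smul]
      simp [abs_of_nonneg (inv_nonneg.mpr (norm_nonneg _))]
      field_simp
    have hvbox : ∀ n, ‖boxD (v n)‖ ≤ 1 / ((n : ℝ) + 1) := by
      intro n
      have h1 : boxD (v n) = ((‖(x n : H)‖⁻¹ : ℝ) : ℂ) • boxD (x n) := map_smul boxD _ _
      rw [h1, norm_smul]
      have h2 : ‖(((‖(x n : H)‖⁻¹ : ℝ)) : ℂ)‖ = ‖(x n : H)‖⁻¹ := by
        simp [abs_of_nonneg (inv_nonneg.mpr (norm_nonneg _))]
      rw [h2, inv_mul_eq_div, div_le_div_iff₀ (hxpos n) (by positivity)]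
      have := (hx n).le
      nlinarith [norm_nonneg (boxD (x n))]
    have hvbox1 : ∀ n, ‖boxD (v n)‖ ≤ 1 := by
      intro n
      refine (hvbox n).trans ?_
      rw [div_le_one (by positivity)]
      linarith [Nat.cast_nonneg (α := ℝ) n]
    have hvQ : ∀ n, QD (incl (v n)) ≤ 1 := by
      intro n
      refine (hQ_box (incl (v n))).trans ?_
      have h3 : ‖Box (incl (v n))‖ = ‖boxD (v n)‖ := rfl
      have h4 : ‖((incl (v n) : Box.domain) : H)‖ = ‖(v n : H)‖ := rfl
      rw [h3, h4, hvnorm n, mul_one]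
      exact hvbox1 n
    -- extract a convergent subsequence of ι ∘ v
    obtain ⟨K, hK, hKsub⟩ := hι_compact.image_closedBall_subset_compact (𝕜₁ := ℂ) 1
    have hmemK : ∀ n, ι ((v n : H)) ∈ K := by
      intro n
      refine hKsub ⟨(v n : H), ?_, rfl⟩
      rw [Metric.mem_closedBall, dist_zero_right, hvnorm n]
    obtain ⟨a, _, φ, hφ, hconv⟩ := hK.tendsto_subseq hmemK
    have hcauchyι : CauchySeq (fun n => ι ((v (φ n) : H))) := hconv.cauchySeq
    -- the subsequence of v is Cauchy
    have hvCauchy : CauchySeq (fun n => ((v (φ n) : H))) := by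
      rw [Metric.cauchySeq_iff]
      intro ε hε
      obtain ⟨C, hC0, hCe⟩ := hestD (ε ^ 2 / 16) (by positivity)
      have hδ : (0:ℝ) < Real.sqrt (ε ^ 2 / (4 * C)) := Real.sqrt_pos.mpr (by positivity)
      obtain ⟨N, hN⟩ := Metric.cauchySeq_iff.mp hcauchyι _ hδ
      refine ⟨N, fun m hm n hn => ?_⟩
      have hdist := hN m hm n hn
      set y : D := v (φ m) - v (φ n) with hy
      have h1 : ‖(y : H)‖ ^ 2 ≤ ε ^ 2 / 16 * QD (incl y) + C * ‖ι ((y : H))‖ ^ 2 := hCe (incl y)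
      have h2 : QD (incl y) ≤ 4 := by
        have h2a : incl y = incl (v (φ m)) - incl (v (φ n)) := map_sub incl _ _
        rw [h2a]
        have := hQ_sub (incl (v (φ m))) (incl (v (φ n)))
        have := hvQ (φ m)
        have := hvQ (φ n)
        linarith
      have h4 : ‖ι ((y : H))‖ ^ 2 < ε ^ 2 / (4 * C) := by
        have e3 : ι ((y : H)) = ι ((v (φ m) : H)) - ι ((v (φ n) : H)) := by
          show ι ((v (φ m) : H) - (v (φ n) : H)) = _
          rw [map_sub]
        have e4 : ‖ι ((y : H))‖ = dist (ι ((v (φ m) : H))) (ι ((v (φ n) : H))) := by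
          rw [e3, dist_eq_norm]
        calc ‖ι ((y : H))‖ ^ 2 < Real.sqrt (ε ^ 2 / (4 * C)) ^ 2 := by
              rw [e4]
              exact pow_lt_pow_left₀ hdist dist_nonneg (by norm_num)
          _ = ε ^ 2 / (4 * C) := Real.sq_sqrt (by positivity)
      have h5 : ‖(y : H)‖ ^ 2 < ε ^ 2 := by
        have hC4 : C * ‖ι ((y : H))‖ ^ 2 < C * (ε ^ 2 / (4 * C)) :=
          mul_lt_mul_of_pos_left h4 hC0
        have hC5 : C * (ε ^ 2 / (4 * C)) = ε ^ 2 / 4 := by field_simp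
        have h6 : ε ^ 2 / 16 * QD (incl y) ≤ ε ^ 2 / 16 * 4 :=
          mul_le_mul_of_nonneg_left h2 (by positivity)
        have h7 : (0:ℝ) < ε ^ 2 := by positivity
        linarith
      rw [dist_eq_norm]
      have e5 : (v (φ m) : H) - (v (φ n) : H) = (y : H) := rfl
      rw [e5]
      exact lt_of_pow_lt_pow_left₀ 2 hε.le h5
    obtain ⟨u, hu_lim⟩ := cauchySeq_tendsto_of_complete hvCauchy
    have hbox0 : Tendsto (fun n => Box (incl (v (φ n)))) atTop (𝓝 0) := by
      refine squeeze_zero_norm (fun n => ?_) tendsto_one_div_add_atTop_nhds_zero_nat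
      refine (hvbox (φ n)).trans ?_
      apply one_div_le_one_div_of_le (by positivity)
      have h8 := hφ.le_apply (x := n)
      have h9 : (n : ℝ) ≤ (φ n : ℝ) := by exact_mod_cast h8
      linarith
    obtain ⟨hu, hbu⟩ := hBox_closed u 0 (fun n => incl (v (φ n))) hu_lim hbox0
    have hQu := hBoxQ u hu
    rw [hbu] at hQu
    simp only [inner_zero_left, Complex.zero_re] at hQu
    have hT0 : T ⟨u, hdomT u hu⟩ = 0 := by
      have : ‖T ⟨u, hdomT u hu⟩‖ = 0 := by
        nlinarith [norm_nonneg (T ⟨u, hdomT u hu⟩), norm_nonneg (T.adjoint ⟨u, hdomA u hu⟩)]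
      exact norm_eq_zero.mp this
    have hA0 : T.adjoint ⟨u, hdomA u hu⟩ = 0 := by
      have : ‖T.adjoint ⟨u, hdomA u hu⟩‖ = 0 := by
        nlinarith [norm_nonneg (T ⟨u, hdomT u hu⟩), norm_nonneg (T.adjoint ⟨u, hdomA u hu⟩)]
      exact norm_eq_zero.mp this
    have hPu : P u := hP_lim _ u (fun n => (hmemD (v (φ n)).2).2) hu_lim
    have hu0 : u = 0 := inner_self_eq_zero.mp (hPu u (hdomT u hu) (hdomA u hu) hT0 hA0)
    have hn1 : Tendsto (fun n => ‖(v (φ n) : H)‖) atTop (𝓝 ‖u‖) := hu_lim.norm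
    have hn2 : (fun n => ‖(v (φ n) : H)‖) = fun _ => (1:ℝ) := funext fun n => hvnorm (φ n)
    rw [hn2] at hn1
    have : (1:ℝ) = ‖u‖ := tendsto_nhds_unique hn1 tendsto_const_nhds |>.symm
    rw [hu0, norm_zero] at this
    norm_num at this
  obtain ⟨c, hc0, hc⟩ := hcoer
  -- injectivity
  have hinj : Function.Injective boxD := by
    intro x y hxy
    have h0 : boxD (x - y) = 0 := by rw [map_sub, hxy, sub_self]
    have h1 := hc (x - y)
    rw [h0, norm_zero, mul_zero] at h1
    have h2 : ((x - y : D) : H) = 0 := norm_le_zero_iff.mp h1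
    have h3 : (x : H) - (y : H) = 0 := h2
    exact Subtype.coe_injective (sub_eq_zero.mp h3)
  -- the range of boxD is closed
  set R : Submodule ℂ H := LinearMap.range boxD with hR
  have hR_closed : IsClosed (R : Set H) := by
    apply IsSeqClosed.isClosed
    intro f fl hf hfl
    choose x hx using fun n => LinearMap.mem_range.mp (hf n)
    have hfC : CauchySeq f := hfl.cauchySeq
    have hxC : CauchySeq (fun n => ((x n : H))) := by
      rw [Metric.cauchySeq_iff]
      intro ε hε
      obtain ⟨N, hN⟩ := Metric.cauchySeq_iff.mp hfC (ε / c) (by positivity)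
      refine ⟨N, fun m hm n hn => ?_⟩
      have h1 := hc (x m - x n)
      rw [map_sub, hx, hx] at h1
      have h2 : ((x m - x n : D) : H) = (x m : H) - (x n : H) := rfl
      rw [h2] at h1
      have h3 := hN m hm n hn
      rw [dist_eq_norm] at h3 ⊢
      calc ‖(x m : H) - (x n : H)‖ ≤ c * ‖f m - f n‖ := h1
        _ < c * (ε / c) := mul_lt_mul_of_pos_left h3 hc0
        _ = ε := by field_simp
    obtain ⟨u, hu_lim⟩ := cauchySeq_tendsto_of_complete hxC
    have hflim : Tendsto (fun n => Box (incl (x n))) atTop (𝓝 fl) := by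
      have : (fun n => Box (incl (x n))) = f := funext fun n => hx n
      rw [this]; exact hfl
    obtain ⟨hu, hbu⟩ := hBox_closed u fl (fun n => incl (x n)) hu_lim hflim
    have hPu : P u := hP_lim _ u (fun n => (hmemD (x n).2).2) hu_lim
    exact LinearMap.mem_range.mpr ⟨⟨u, ⟨hu, hPu⟩⟩, hbu⟩
  haveI : CompleteSpace R := hR_closed.completeSpace_coe
  let e : D ≃ₗ[ℂ] R := LinearEquiv.ofInjective boxD hinj
  have heS : ∀ f : R, boxD (e.symm f) = (f : H) := by
    intro f
    conv_rhs => rw [← e.apply_symm_apply f]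
    exact (LinearEquiv.ofInjective_apply boxD (e.symm f)).symm
  let Sl : R →ₗ[ℂ] H := D.subtype.comp (e.symm : R ≃ₗ[ℂ] D).toLinearMap
  have hSl : ∀ f : R, ‖Sl f‖ ≤ c * ‖f‖ := by
    intro f
    have h1 := hc (e.symm f)
    rw [heS] at h1
    exact h1
  let S : R →L[ℂ] H := Sl.mkContinuous c hSl
  have hS_apply : ∀ f : R, S f = ((e.symm f : D) : H) := fun f => rfl
  let G : H →L[ℂ] H := S.comp R.orthogonalProjectionOnto
  refine ⟨G, ?_, ?_⟩
  · -- compactness of G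
    set B₁ : Set H := Subtype.val '' {x : D | ‖boxD x‖ ≤ 1} with hB₁
    have hQ1 : ∀ x : D, ‖boxD x‖ ≤ 1 → QD (incl x) ≤ c := by
      intro x hx1
      refine (hQ_box (incl x)).trans ?_
      have h1 : ‖Box (incl x)‖ = ‖boxD x‖ := rfl
      have h2 : ‖((incl x : Box.domain) : H)‖ = ‖(x : H)‖ := rfl
      rw [h1, h2]
      have h3 := hc x
      nlinarith [norm_nonneg (boxD x), norm_nonneg ((x : H))]
    have hB₁bd : ∀ y ∈ B₁, ‖y‖ ≤ c := by
      rintro _ ⟨x, hx1, rfl⟩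
      have hx1' : ‖boxD x‖ ≤ 1 := hx1
      exact (hc x).trans (by nlinarith [hx1', hc0])
    have hTB : TotallyBounded B₁ := by
      rw [Metric.totallyBounded_iff]
      intro ε hε
      obtain ⟨C, hC0, hCe⟩ := hestD (ε ^ 2 / (8 * (c + 1))) (by positivity)
      have hδ0 : (0:ℝ) < Real.sqrt (ε ^ 2 / (4 * C)) := Real.sqrt_pos.mpr (by positivity)
      have hB₁b : Bornology.IsBounded B₁ := by
        apply Bornology.IsBounded.subset (Metric.isBounded_closedBall (x := (0:H)) (r := c))
        intro y hy
        rw [Metric.mem_closedBall, dist_zero_right]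
        exact hB₁bd y hy
      have hι_tb : TotallyBounded (⇑ι '' B₁) :=
        ((hι_compact.isCompact_closure_image_of_bounded (𝕜₁ := ℂ) hB₁b).totallyBounded).subset
          subset_closure
      obtain ⟨t, hts, htf, hcover⟩ :=
        Metric.finite_approx_of_totallyBounded hι_tb _ hδ0
      refine ⟨Subtype.val '' {x : D | ‖boxD x‖ ≤ 1 ∧ ι ((x : H)) ∈ t}, ?_, ?_⟩
      · apply Set.Finite.subset (htf.preimage (Set.injOn_of_injective hι_inj))
        rintro _ ⟨x, ⟨_, hx2⟩, rfl⟩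
        exact hx2
      · rintro _ ⟨x, hx1, rfl⟩
        have hmem : ι ((x : H)) ∈ ⇑ι '' B₁ := ⟨(x : H), ⟨x, hx1, rfl⟩, rfl⟩
        obtain ⟨z, hzt, hz⟩ := Set.mem_iUnion₂.mp (hcover hmem)
        obtain ⟨x', hx'1, hx'z⟩ : ∃ x' : D, ‖boxD x'‖ ≤ 1 ∧ ι ((x' : H)) = z := by
          obtain ⟨_, ⟨x', hm, rfl⟩, rfl⟩ := hts hzt
          exact ⟨x', hm, rfl⟩
        rw [Set.mem_iUnion₂]
        refine ⟨(x' : H), ⟨x', ⟨hx'1, by rw [hx'z]; exact hzt⟩, rfl⟩, ?_⟩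
        rw [Metric.mem_ball, dist_eq_norm]
        have h1 := hCe (incl (x - x'))
        have e_incl : ((incl (x - x') : Box.domain) : H) = (x : H) - (x' : H) := rfl
        rw [e_incl] at h1
        have h2 : QD (incl (x - x')) ≤ 4 * c := by
          have h2a : incl (x - x') = incl x - incl x' := map_sub incl _ _
          rw [h2a]
          have := hQ_sub (incl x) (incl x')
          have := hQ1 x hx1
          have := hQ1 x' hx'1
          linarith
        have h4 : ‖ι ((x : H) - (x' : H))‖ ^ 2 < ε ^ 2 / (4 * C) := by
          have e4 : ‖ι ((x : H) - (x' : H))‖ = dist (ι ((x : H))) z := by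
            rw [map_sub, ← hx'z, dist_eq_norm]
          rw [Metric.mem_ball] at hz
          calc ‖ι ((x : H) - (x' : H))‖ ^ 2 < Real.sqrt (ε ^ 2 / (4 * C)) ^ 2 := by
                rw [e4]
                exact pow_lt_pow_left₀ hz dist_nonneg (by norm_num)
            _ = ε ^ 2 / (4 * C) := Real.sq_sqrt (by positivity)
        have h5 : ‖((x : H)) - ((x' : H))‖ ^ 2 < ε ^ 2 := by
          have hC4 : C * ‖ι ((x : H) - (x' : H))‖ ^ 2 < C * (ε ^ 2 / (4 * C)) :=
            mul_lt_mul_of_pos_left h4 hC0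
          have hC5 : C * (ε ^ 2 / (4 * C)) = ε ^ 2 / 4 := by field_simp
          have h6 : ε ^ 2 / (8 * (c + 1)) * QD (incl (x - x')) ≤
              ε ^ 2 / (8 * (c + 1)) * (4 * c) :=
            mul_le_mul_of_nonneg_left h2 (by positivity)
          have h7 : ε ^ 2 / (8 * (c + 1)) * (4 * c) ≤ ε ^ 2 / 2 := by
            rw [div_mul_eq_mul_div, div_le_div_iff₀ (by positivity) (by norm_num)]
            nlinarith [pow_pos hε 2, hc0]
          linarith [pow_pos hε 2]
        exact lt_of_pow_lt_pow_left₀ 2 hε.le h5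
    have hSc : IsCompactOperator (⇑S) := by
      have himg : ⇑S '' Metric.closedBall 0 1 ⊆ B₁ := by
        rintro _ ⟨f, hf, rfl⟩
        refine ⟨e.symm f, ?_, rfl⟩
        show ‖boxD (e.symm f)‖ ≤ 1
        rw [heS]
        rw [Metric.mem_closedBall, dist_zero_right] at hf
        exact hf
      have hK : IsCompact (closure (⇑S '' Metric.closedBall 0 1)) :=
        TotallyBounded.isCompact_of_isClosed ((hTB.subset himg).closure) isClosed_closure
      exact ⟨closure (⇑S '' Metric.closedBall 0 1), hK,
        Filter.mem_of_superset (Metric.closedBall_mem_nhds 0 one_pos)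
          fun f hf => subset_closure ⟨f, hf, rfl⟩⟩
    have hGc := hSc.comp_clm R.orthogonalProjectionOnto
    exact hGc
  · intro u hu horth
    have hmemR : Box ⟨u, hu⟩ ∈ R := LinearMap.mem_range.mpr ⟨⟨u, ⟨hu, horth⟩⟩, rfl⟩
    have hproj : R.orthogonalProjectionOnto (Box ⟨u, hu⟩) = ⟨Box ⟨u, hu⟩, hmemR⟩ :=
      Submodule.orthogonalProjectionOnto_mem_subspace_eq_self (⟨Box ⟨u, hu⟩, hmemR⟩ : R)
    show S (R.orthogonalProjectionOnto (Box ⟨u, hu⟩)) = u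
    rw [hproj, hS_apply]
    have hx : e ⟨u, ⟨hu, horth⟩⟩ = ⟨Box ⟨u, hu⟩, hmemR⟩ :=
      Subtype.ext (LinearEquiv.ofInjective_apply boxD _)
    rw [← hx, e.symm_apply_apply]
end

section
/- Let H be a Hilbert space, T closed densely defined on H, and P₁, P₂, P₃ bounded operators with P₁ + P₂ + P₃ = I, each commuting with T up to a bounded error: ‖[T, P_i]u‖ ≤ C₀‖u‖ on dom T. Suppose for each i there is an estimate ‖P_i u‖² ≤ ε(‖T P_i u‖² + ‖S P_i u‖²) + C_ε‖ι u‖²_{-1}, with S closed densely defined also satisfying ‖[S, P_i]u‖ ≤ C₀‖u‖. Then for ε small enough, ‖u‖² ≤ ε'(‖Tu‖² + ‖Su‖²) + C'_{ε'}‖ι u‖²_{-1} for all u ∈ dom T ∩ dom S, where ε' → 0 as ε → 0. -/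
set_option maxHeartbeats 1000000


/-- patching microlocal estimates. If `P₁ + P₂ + P₃ = I` with each `P_i`
bounded, preserving the domains of the closed densely defined operators `T` and `S` and
commuting with them up to a bounded error, and each piece `P_i u` satisfies a compactness
estimate, then a global compactness estimate holds (with constants `ε'` arbitrarily small
as the microlocal `ε` shrinks). -/
theorem patching_microlocal_estimates
    {H H' H'' Hm : Type*}
    [NormedAddCommGroup H] [InnerProductSpace ℂ H] [CompleteSpace H]
    [NormedAddCommGroup H'] [InnerProductSpace ℂ H'] [CompleteSpace H']
    [NormedAddCommGroup H''] [InnerProductSpace ℂ H''] [CompleteSpace H'']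
    [NormedAddCommGroup Hm] [NormedSpace ℂ Hm]
    (ι : H →L[ℂ] Hm)
    (T : H →ₗ.[ℂ] H') (S : H →ₗ.[ℂ] H'')
    (hT_closed : T.IsClosed) (hT_dense : Dense (T.domain : Set H))
    (hS_closed : S.IsClosed) (hS_dense : Dense (S.domain : Set H))
    (P : Fin 3 → H →L[ℂ] H) (P' : Fin 3 → H' →L[ℂ] H') (P'' : Fin 3 → H'' →L[ℂ] H'')
    (hsum : ∀ u : H, P 0 u + P 1 u + P 2 u = u)
    (hPT : ∀ (i : Fin 3), ∀ u ∈ T.domain, P i u ∈ T.domain)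
    (hPS : ∀ (i : Fin 3), ∀ u ∈ S.domain, P i u ∈ S.domain)
    (C₀ : ℝ) (hC₀ : 0 < C₀)
    (hcommT : ∀ (i : Fin 3) (u : H) (hu : u ∈ T.domain),
      ‖T ⟨P i u, hPT i u hu⟩ - P' i (T ⟨u, hu⟩)‖ ≤ C₀ * ‖u‖)
    (hcommS : ∀ (i : Fin 3) (u : H) (hu : u ∈ S.domain),
      ‖S ⟨P i u, hPS i u hu⟩ - P'' i (S ⟨u, hu⟩)‖ ≤ C₀ * ‖u‖)
    (hmicro : ∀ ε > (0 : ℝ), ∃ C > (0 : ℝ),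
      ∀ (i : Fin 3) (u : H) (huT : u ∈ T.domain) (huS : u ∈ S.domain),
        ‖P i u‖ ^ 2 ≤
          ε * (‖T ⟨P i u, hPT i u huT⟩‖ ^ 2 + ‖S ⟨P i u, hPS i u huS⟩‖ ^ 2) +
            C * ‖ι u‖ ^ 2) :
    ∀ ε' > (0 : ℝ), ∃ C' > (0 : ℝ),
      ∀ (u : H) (huT : u ∈ T.domain) (huS : u ∈ S.domain),
        ‖u‖ ^ 2 ≤ ε' * (‖T ⟨u, huT⟩‖ ^ 2 + ‖S ⟨u, huS⟩‖ ^ 2) + C' * ‖ι u‖ ^ 2 := by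
  intro ε' hε'
  set M : ℝ := 1 + (‖P' 0‖ + ‖P' 1‖ + ‖P' 2‖) + (‖P'' 0‖ + ‖P'' 1‖ + ‖P'' 2‖) with hMdef
  have hMpos : 0 < M := by positivity
  have hMT : ∀ i, ‖P' i‖ ≤ M := by
    intro i
    fin_cases i
    · show ‖P' 0‖ ≤ M
      nlinarith [norm_nonneg (P' 0), norm_nonneg (P' 1), norm_nonneg (P' 2),
        norm_nonneg (P'' 0), norm_nonneg (P'' 1), norm_nonneg (P'' 2)]
    · show ‖P' 1‖ ≤ M
      nlinarith [norm_nonneg (P' 0), norm_nonneg (P' 1), norm_nonneg (P' 2),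
        norm_nonneg (P'' 0), norm_nonneg (P'' 1), norm_nonneg (P'' 2)]
    · show ‖P' 2‖ ≤ M
      nlinarith [norm_nonneg (P' 0), norm_nonneg (P' 1), norm_nonneg (P' 2),
        norm_nonneg (P'' 0), norm_nonneg (P'' 1), norm_nonneg (P'' 2)]
  have hMS : ∀ i, ‖P'' i‖ ≤ M := by
    intro i
    fin_cases i
    · show ‖P'' 0‖ ≤ M
      nlinarith [norm_nonneg (P' 0), norm_nonneg (P' 1), norm_nonneg (P' 2),
        norm_nonneg (P'' 0), norm_nonneg (P'' 1), norm_nonneg (P'' 2)]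
    · show ‖P'' 1‖ ≤ M
      nlinarith [norm_nonneg (P' 0), norm_nonneg (P' 1), norm_nonneg (P' 2),
        norm_nonneg (P'' 0), norm_nonneg (P'' 1), norm_nonneg (P'' 2)]
    · show ‖P'' 2‖ ≤ M
      nlinarith [norm_nonneg (P' 0), norm_nonneg (P' 1), norm_nonneg (P' 2),
        norm_nonneg (P'' 0), norm_nonneg (P'' 1), norm_nonneg (P'' 2)]
  set ε : ℝ := min (ε' / (36 * M ^ 2)) (1 / (72 * C₀ ^ 2)) with hεdef
  have hεpos : 0 < ε := lt_min (by positivity) (by positivity)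
  obtain ⟨C, hCpos, hest⟩ := hmicro ε hεpos
  refine ⟨18 * C, by positivity, ?_⟩
  intro u huT huS
  set a := ‖T ⟨u, huT⟩‖ with ha
  set b := ‖S ⟨u, huS⟩‖ with hb
  set n := ‖u‖ with hn
  set m := ‖ι u‖ with hm
  have hna : 0 ≤ a := norm_nonneg _
  have hnb : 0 ≤ b := norm_nonneg _
  have hnn : 0 ≤ n := norm_nonneg _
  have hnm : 0 ≤ m := norm_nonneg _
  -- bound the localized operator norms
  have hTbound : ∀ i, ‖T ⟨P i u, hPT i u huT⟩‖ ≤ M * a + C₀ * n := by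
    intro i
    have h1 := hcommT i u huT
    have h2 : ‖P' i (T ⟨u, huT⟩)‖ ≤ M * a :=
      le_trans ((P' i).le_opNorm _) (mul_le_mul_of_nonneg_right (hMT i) (norm_nonneg _))
    have h3 : ‖T ⟨P i u, hPT i u huT⟩‖ ≤
        ‖T ⟨P i u, hPT i u huT⟩ - P' i (T ⟨u, huT⟩)‖ + ‖P' i (T ⟨u, huT⟩)‖ := by
      simpa using norm_add_le (T ⟨P i u, hPT i u huT⟩ - P' i (T ⟨u, huT⟩))
        (P' i (T ⟨u, huT⟩))
    linarith
  have hSbound : ∀ i, ‖S ⟨P i u, hPS i u huS⟩‖ ≤ M * b + C₀ * n := by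
    intro i
    have h1 := hcommS i u huS
    have h2 : ‖P'' i (S ⟨u, huS⟩)‖ ≤ M * b :=
      le_trans ((P'' i).le_opNorm _) (mul_le_mul_of_nonneg_right (hMS i) (norm_nonneg _))
    have h3 : ‖S ⟨P i u, hPS i u huS⟩‖ ≤
        ‖S ⟨P i u, hPS i u huS⟩ - P'' i (S ⟨u, huS⟩)‖ + ‖P'' i (S ⟨u, huS⟩)‖ := by
      simpa using norm_add_le (S ⟨P i u, hPS i u huS⟩ - P'' i (S ⟨u, huS⟩))
        (P'' i (S ⟨u, huS⟩))
    linarith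
  have hsq : ∀ i, ‖T ⟨P i u, hPT i u huT⟩‖ ^ 2 + ‖S ⟨P i u, hPS i u huS⟩‖ ^ 2 ≤
      2 * M ^ 2 * (a ^ 2 + b ^ 2) + 4 * C₀ ^ 2 * n ^ 2 := by
    intro i
    have h1 := hTbound i
    have h2 := hSbound i
    have h3 : (0:ℝ) ≤ ‖T ⟨P i u, hPT i u huT⟩‖ := norm_nonneg _
    have h4 : (0:ℝ) ≤ ‖S ⟨P i u, hPS i u huS⟩‖ := norm_nonneg _
    nlinarith [sq_nonneg (M * a - C₀ * n), sq_nonneg (M * b - C₀ * n)]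
  -- per-piece estimate
  have hpiece : ∀ i, ‖P i u‖ ^ 2 ≤
      ε * (2 * M ^ 2 * (a ^ 2 + b ^ 2) + 4 * C₀ ^ 2 * n ^ 2) + C * m ^ 2 := by
    intro i
    have h1 := hest i u huT huS
    have h2 := mul_le_mul_of_nonneg_left (hsq i) hεpos.le
    linarith
  -- sum up
  have htri : n ≤ ‖P 0 u‖ + ‖P 1 u‖ + ‖P 2 u‖ := by
    calc n = ‖P 0 u + P 1 u + P 2 u‖ := by rw [hsum u]
    _ ≤ ‖P 0 u + P 1 u‖ + ‖P 2 u‖ := norm_add_le _ _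
    _ ≤ ‖P 0 u‖ + ‖P 1 u‖ + ‖P 2 u‖ := by
        have := norm_add_le (P 0 u) (P 1 u); linarith
  have hp0 : (0:ℝ) ≤ ‖P 0 u‖ := norm_nonneg _
  have hp1 : (0:ℝ) ≤ ‖P 1 u‖ := norm_nonneg _
  have hp2 : (0:ℝ) ≤ ‖P 2 u‖ := norm_nonneg _
  have step1 : n ^ 2 ≤ 3 * (‖P 0 u‖ ^ 2 + ‖P 1 u‖ ^ 2 + ‖P 2 u‖ ^ 2) := by
    nlinarith [sq_nonneg (‖P 0 u‖ - ‖P 1 u‖), sq_nonneg (‖P 1 u‖ - ‖P 2 u‖),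
      sq_nonneg (‖P 0 u‖ - ‖P 2 u‖)]
  have step2 : n ^ 2 ≤ 18 * ε * M ^ 2 * (a ^ 2 + b ^ 2) + 36 * ε * C₀ ^ 2 * n ^ 2
      + 9 * C * m ^ 2 := by
    have h0 := hpiece 0
    have h1 := hpiece 1
    have h2 := hpiece 2
    nlinarith [step1]
  -- absorb terms using smallness of ε
  have hA : 36 * M ^ 2 * ε ≤ ε' := by
    have : ε ≤ ε' / (36 * M ^ 2) := min_le_left _ _
    rw [le_div_iff₀ (by positivity)] at this
    linarith
  have hB : 72 * C₀ ^ 2 * ε ≤ 1 := by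
    have : ε ≤ 1 / (72 * C₀ ^ 2) := min_le_right _ _
    rw [le_div_iff₀ (by positivity)] at this
    linarith
  have hA' : 36 * M ^ 2 * ε * (a ^ 2 + b ^ 2) ≤ ε' * (a ^ 2 + b ^ 2) :=
    mul_le_mul_of_nonneg_right hA (by positivity)
  have hB' : 72 * C₀ ^ 2 * ε * n ^ 2 ≤ 1 * n ^ 2 :=
    mul_le_mul_of_nonneg_right hB (by positivity)
  linarith [step2, hA', hB']
end

section
/- Let Q(u) = ‖Tu‖² + ‖Su‖² be a nonnegative quadratic form with 𝓗 = {u : Q(u)=0} closed, and suppose ‖u‖² ≤ C Q(u) for all u ∈ 𝓗^⟂ ∩ dom Q. Then the self-adjoint operator □ associated to Q restricted to 𝓗^⟂ is injective with bounded inverse satisfying ‖□^{-1}f‖ ≤ C‖f‖ for f ∈ 𝓗^⟂ ∩ range □. -/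
/-- if `Q(u) = ‖Tu‖² + ‖Su‖²`, the harmonic space `𝓗 = {u : Q u = 0}` is
closed, and `‖u‖² ≤ C Q(u)` on `𝓗ᗮ ∩ dom Q`, then the self-adjoint operator `□`
associated to `Q` is injective on `𝓗ᗮ` with bounded inverse of norm at most `C`
(cf. Nicoara, Lemma 5.3). -/
theorem box_invertible_on_harmonic_complement
    {H H' H'' : Type*}
    [NormedAddCommGroup H] [InnerProductSpace ℂ H] [CompleteSpace H]
    [NormedAddCommGroup H'] [InnerProductSpace ℂ H'] [CompleteSpace H']
    [NormedAddCommGroup H''] [InnerProductSpace ℂ H''] [CompleteSpace H'']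
    (T : H →ₗ.[ℂ] H') (S : H →ₗ.[ℂ] H'')
    (hT_closed : T.IsClosed) (hS_closed : S.IsClosed)
    (h_dense : Dense ((T.domain ⊓ S.domain : Submodule ℂ H) : Set H))
    (h𝓗_closed : IsClosed {u : H | ∃ (huT : u ∈ T.domain) (huS : u ∈ S.domain),
      T ⟨u, huT⟩ = 0 ∧ S ⟨u, huS⟩ = 0})
    (Box : H →ₗ.[ℂ] H) (hBox_sa : IsSelfAdjoint Box)
    (hdomT : ∀ u ∈ Box.domain, u ∈ T.domain)
    (hdomS : ∀ u ∈ Box.domain, u ∈ S.domain)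
    (hBoxQ : ∀ (u : H) (hu : u ∈ Box.domain),
      (inner (𝕜 := ℂ) (Box ⟨u, hu⟩) u).re =
        ‖T ⟨u, hdomT u hu⟩‖ ^ 2 + ‖S ⟨u, hdomS u hu⟩‖ ^ 2)
    (C : ℝ) (hC : 0 < C)
    (est : ∀ (u : H) (huT : u ∈ T.domain) (huS : u ∈ S.domain),
      (∀ v ∈ {u : H | ∃ (hvT : u ∈ T.domain) (hvS : u ∈ S.domain),
          T ⟨u, hvT⟩ = 0 ∧ S ⟨u, hvS⟩ = 0}, inner (𝕜 := ℂ) u v = 0) →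
      ‖u‖ ^ 2 ≤ C * (‖T ⟨u, huT⟩‖ ^ 2 + ‖S ⟨u, huS⟩‖ ^ 2)) :
    ∀ (u : H) (hu : u ∈ Box.domain),
      (∀ v ∈ {u : H | ∃ (hvT : u ∈ T.domain) (hvS : u ∈ S.domain),
          T ⟨u, hvT⟩ = 0 ∧ S ⟨u, hvS⟩ = 0}, inner (𝕜 := ℂ) u v = 0) →
      (Box ⟨u, hu⟩ = 0 → u = 0) ∧ ‖u‖ ≤ C * ‖Box ⟨u, hu⟩‖ := by
  intro u hu horth
  have key : ‖u‖ ^ 2 ≤ C * ‖Box ⟨u, hu⟩‖ * ‖u‖ := by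
    calc ‖u‖ ^ 2 ≤ C * (‖T ⟨u, hdomT u hu⟩‖ ^ 2 + ‖S ⟨u, hdomS u hu⟩‖ ^ 2) :=
          est u (hdomT u hu) (hdomS u hu) horth
      _ = C * (inner (𝕜 := ℂ) (Box ⟨u, hu⟩) u).re := by rw [hBoxQ u hu]
      _ ≤ C * (‖Box ⟨u, hu⟩‖ * ‖u‖) := by
          refine mul_le_mul_of_nonneg_left ?_ hC.le
          calc (inner (𝕜 := ℂ) (Box ⟨u, hu⟩) u).re ≤ ‖inner (𝕜 := ℂ) (Box ⟨u, hu⟩) u‖ := Complex.re_le_norm _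
            _ ≤ ‖Box ⟨u, hu⟩‖ * ‖u‖ := norm_inner_le_norm _ _
      _ = C * ‖Box ⟨u, hu⟩‖ * ‖u‖ := by ring
  constructor
  · intro h0
    have : ‖u‖ ^ 2 ≤ 0 := by simpa [h0] using key
    have := le_antisymm (by nlinarith [norm_nonneg u]) (norm_nonneg u)
    exact norm_eq_zero.mp this
  · rcases eq_or_ne ‖u‖ 0 with h | h
    · rw [h]; positivity
    · have hpos : 0 < ‖u‖ := lt_of_le_of_ne (norm_nonneg u) (Ne.symm h)
      have := key
      nlinarith
end
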